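/- arXiv:0810.3957 — 8 statements merged into one kernel-verified Lean document; each statement's English description precedes it below -/
import Mathlib

section
/- Let d ≥ 1, let 1 ≤ k ≤ d, and let p₀, p₁, …, p_k ∈ ℝ^d be affinely independent points. Let w₀, w₁, …, w_k be non-negative real numbers such that the open balls B(p_i, √(w_i)) are pairwise disjoint. Then there exists a unique pair (z,u) ∈ ℝ^d × ℝ such that z lies in the affine span H of {p₀,…,p_k} and ‖z − p_i‖² = u + w_i for every i = 0,1,…,k. -/
noncomputable section

open Metric

/-- Let `p₀,…,p_k ∈ ℝ^d` (`1 ≤ k ≤ d`) be affinely independent and let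
`w₀,…,w_k ≥ 0` be such that the open balls `B(pᵢ, √wᵢ)` are pairwise disjoint.
Then there is a unique pair `(z,u)` with `z` in the affine span of the `pᵢ`'s and
`‖z - pᵢ‖² = u + wᵢ` for all `i`. -/
theorem stmt2 {d : ℕ} (hd : 1 ≤ d) (k : ℕ) (hk1 : 1 ≤ k) (hkd : k ≤ d)
    (p : Fin (k + 1) → EuclideanSpace ℝ (Fin d)) (hp : AffineIndependent ℝ p)
    (w : Fin (k + 1) → ℝ) (hw : ∀ i, 0 ≤ w i)
    (hdisj : ∀ i j, i ≠ j →
      Disjoint (ball (p i) (Real.sqrt (w i))) (ball (p j) (Real.sqrt (w j)))) :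
    ∃! zu : EuclideanSpace ℝ (Fin d) × ℝ,
      zu.1 ∈ affineSpan ℝ (Set.range p) ∧ ∀ i, ‖zu.1 - p i‖ ^ 2 = zu.2 + w i := by
  classical
  set ι := {x : Fin (k+1) // x ≠ (0 : Fin (k+1))}
  set v : ι → EuclideanSpace ℝ (Fin d) := fun i => p i - p 0 with hv
  have hli : LinearIndependent ℝ v := by
    have h := (affineIndependent_iff_linearIndependent_vsub ℝ p 0).1 hp
    simpa [hv, vsub_eq_sub] using h
  set V : Submodule ℝ (EuclideanSpace ℝ (Fin d)) := Submodule.span ℝ (Set.range v) with hV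
  have hVfd : FiniteDimensional ℝ V := FiniteDimensional.span_of_finite ℝ (Set.finite_range v)
  let T : V →ₗ[ℝ] (ι → ℝ) :=
    { toFun := fun y i => inner ℝ (v i) (y : EuclideanSpace ℝ (Fin d))
      map_add' := fun a b => by funext i; simp [inner_add_right]
      map_smul' := fun c a => by funext i; simp [inner_smul_right] }
  have hTinj : Function.Injective T := by
    rw [← LinearMap.ker_eq_bot]
    apply (Submodule.eq_bot_iff _).2
    rintro y hy
    have hy0 : ∀ i, (inner ℝ (v i) (y : EuclideanSpace ℝ (Fin d)) : ℝ) = 0 := fun i =>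
      congrFun (LinearMap.mem_ker.1 hy) i
    have hymem : (y : EuclideanSpace ℝ (Fin d)) ∈ Submodule.span ℝ (Set.range v) := y.2
    rw [Submodule.mem_span_range_iff_exists_fun] at hymem
    obtain ⟨c, hc⟩ := hymem
    have hyy : (inner ℝ (y : EuclideanSpace ℝ (Fin d)) (y : EuclideanSpace ℝ (Fin d)) : ℝ) = 0 := by
      nth_rewrite 1 [← hc]
      rw [sum_inner]
      simp only [real_inner_smul_left, hy0, mul_zero]
      exact Finset.sum_const_zero
    have : (y : EuclideanSpace ℝ (Fin d)) = 0 := inner_self_eq_zero.1 hyy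
    exact Subtype.ext this
  have hfr : Module.finrank ℝ V = Module.finrank ℝ (ι → ℝ) := by
    rw [finrank_span_eq_card hli, Module.finrank_pi]
  have hTsurj : Function.Surjective T :=
    (LinearMap.injective_iff_surjective_of_finrank_eq_finrank hfr).1 hTinj
  set c : ι → ℝ := fun i => (‖v i‖ ^ 2 + w 0 - w i) / 2 with hc
  obtain ⟨y, hy⟩ := hTsurj c
  have hyc : ∀ i : ι, (inner ℝ (v i) (y : EuclideanSpace ℝ (Fin d)) : ℝ) = c i := fun i => congrFun hy i
  set z : EuclideanSpace ℝ (Fin d) := (y : EuclideanSpace ℝ (Fin d)) + p 0 with hz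
  set u : ℝ := ‖(y : EuclideanSpace ℝ (Fin d))‖ ^ 2 - w 0 with hu
  have hp0 : p 0 ∈ affineSpan ℝ (Set.range p) := mem_affineSpan ℝ (Set.mem_range_self 0)
  have hdirV : (affineSpan ℝ (Set.range p)).direction = V := by
    rw [direction_affineSpan, vectorSpan_range_eq_span_range_vsub_right_ne ℝ p 0]
    simp [hV, hv, vsub_eq_sub]
    rfl
  have hzsub : ∀ i : ι, z - p i = (y : EuclideanSpace ℝ (Fin d)) - v i := by
    intro i
    simp only [hz, hv]
    abel
  have hsat : ∀ (y' : EuclideanSpace ℝ (Fin d)), (∀ i : ι, (inner ℝ (v i) y' : ℝ) = c i) →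
      ∀ i : Fin (k+1), ‖(y' + p 0) - p i‖ ^ 2 = (‖y'‖ ^ 2 - w 0) + w i := by
    intro y' hy' i
    by_cases h0 : i = 0
    · subst h0; simp
    · have hsub : (y' + p 0) - p i = y' - v ⟨i, h0⟩ := by simp only [hv]; abel
      rw [hsub, norm_sub_sq_real, real_inner_comm, hy' ⟨i, h0⟩, hc]
      ring
  refine ⟨(z, u), ⟨?_, ?_⟩, ?_⟩
  · have := AffineSubspace.vadd_mem_of_mem_direction (by rw [hdirV]; exact y.2) hp0
    simpa [hz, vadd_eq_add] using this
  · intro i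
    have := hsat (y : EuclideanSpace ℝ (Fin d)) hyc i
    simpa [hz, hu] using this
  · rintro ⟨z', u'⟩ ⟨hz'mem, hz'⟩
    set y' : EuclideanSpace ℝ (Fin d) := z' - p 0 with hy'
    have hy'V : y' ∈ V := by
      rw [← hdirV]
      exact AffineSubspace.vsub_mem_direction hz'mem hp0
    have hz'' : z' = y' + p 0 := by rw [hy']; abel
    have h0' : ‖y'‖ ^ 2 = u' + w 0 := by
      have := hz' 0
      rwa [show z' - p 0 = y' from rfl] at this
    have hy'c : ∀ i : ι, (inner ℝ (v i) y' : ℝ) = c i := by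
      intro i
      have hi := hz' i
      have hsub : z' - p (i : Fin (k+1)) = y' - v i := by
        rw [hz'']; simp only [hv]; abel
      rw [hsub, norm_sub_sq_real, real_inner_comm] at hi
      rw [hc]
      linarith
    have hTy' : T ⟨y', hy'V⟩ = c := funext fun i => hy'c i
    have hyy' : (⟨y', hy'V⟩ : V) = y := hTinj (hTy'.trans hy.symm)
    have hy'eq : y' = (y : EuclideanSpace ℝ (Fin d)) := congrArg Subtype.val hyy'
    have hzeq : z' = z := by rw [hz'', hy'eq, hz]
    have hueq : u' = u := by
      rw [hu, ← hy'eq]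
      linarith
    exact Prod.ext hzeq hueq
end
end

section
/- Let d ≥ 1, M > 0, let P ⊆ ℝ^d be M-separated and 2M-syndetic, let w ∈ 𝒲, and let τ = {p₀,p₁,…,p_d} ∈ Del(P,w) with orthosphere (z,u) with respect to w. Then u < 4M², ‖z − p_i‖² < 5M² for every i, and consequently ‖p_i − p_j‖ < 2√5·M for all i, j = 0,1,…,d. -/
noncomputable section

open Metric

variable {d : ℕ}

/-- `P` is `M`-separated. -/
def IsSeparatedSet (M : ℝ) (P : Set (EuclideanSpace ℝ (Fin d))) : Prop :=
  ∀ p ∈ P, ∀ q ∈ P, p ≠ q → M ≤ dist p q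

/-- `P` is `M`-syndetic. -/
def IsSyndeticSet (M : ℝ) (P : Set (EuclideanSpace ℝ (Fin d))) : Prop :=
  ∀ x : EuclideanSpace ℝ (Fin d), ∃ p ∈ P, dist x p < M

/-- `Δ_k(P)`: the `(k+1)`-element affinely independent subsets of `P`. -/
def DeltaK (k : ℕ) (P : Set (EuclideanSpace ℝ (Fin d))) :
    Set (Finset (EuclideanSpace ℝ (Fin d))) :=
  {τ | τ.card = k + 1 ∧ ↑τ ⊆ P ∧
    AffineIndependent ℝ (fun q : (τ : Set (EuclideanSpace ℝ (Fin d))) =>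
      (q : EuclideanSpace ℝ (Fin d)))}

/-- `(z,u)` is the orthosphere of `τ` with respect to the weight function `w`. -/
def IsOrthosphere (τ : Finset (EuclideanSpace ℝ (Fin d)))
    (w : EuclideanSpace ℝ (Fin d) → ℝ) (z : EuclideanSpace ℝ (Fin d)) (u : ℝ) : Prop :=
  z ∈ affineSpan ℝ (↑τ : Set (EuclideanSpace ℝ (Fin d))) ∧
    ∀ p ∈ τ, ‖z - p‖ ^ 2 = u + w p

/-- `(z,u)` is empty in `(P,w)`. -/
def IsEmptySphere (P : Set (EuclideanSpace ℝ (Fin d)))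
    (w : EuclideanSpace ℝ (Fin d) → ℝ) (z : EuclideanSpace ℝ (Fin d)) (u : ℝ) : Prop :=
  ∀ p ∈ P, 0 ≤ ‖z - p‖ ^ 2 - u - w p

/-- The set `𝒲` of weight functions on `P`: `0 ≤ w(p) ≤ (M/3)²` for `p ∈ P`. -/
def WeightFns (M : ℝ) (P : Set (EuclideanSpace ℝ (Fin d))) :
    Set (EuclideanSpace ℝ (Fin d) → ℝ) :=
  {w | ∀ p ∈ P, w p ∈ Set.Icc (0 : ℝ) ((M / 3) ^ 2)}

/-- `Del(P,w)`: elements of `Δ_d(P)` whose orthosphere with respect to `w`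
is empty in `(P,w)`. -/
def Del (P : Set (EuclideanSpace ℝ (Fin d))) (w : EuclideanSpace ℝ (Fin d) → ℝ) :
    Set (Finset (EuclideanSpace ℝ (Fin d))) :=
  {τ | τ ∈ DeltaK d P ∧ ∃ z u, IsOrthosphere τ w z u ∧ IsEmptySphere P w z u}

lemma ortho_unique (τ : Finset (EuclideanSpace ℝ (Fin d)))
    (hcard : τ.card = d + 1)
    (hind : AffineIndependent ℝ (fun q : (τ : Set (EuclideanSpace ℝ (Fin d))) =>
      (q : EuclideanSpace ℝ (Fin d))))
    (w : EuclideanSpace ℝ (Fin d) → ℝ) {z z' : EuclideanSpace ℝ (Fin d)} {u u' : ℝ}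
    (h : IsOrthosphere τ w z u) (h' : IsOrthosphere τ w z' u') : z = z' ∧ u = u' := by
  have htop : affineSpan ℝ (↑τ : Set (EuclideanSpace ℝ (Fin d))) = ⊤ := by
    have := hind.affineSpan_eq_top_iff_card_eq_finrank_add_one.mpr ?_
    · rwa [Subtype.range_coe] at this
    · simp [finrank_euclideanSpace_fin, hcard]
  have hvs : vectorSpan ℝ (↑τ : Set (EuclideanSpace ℝ (Fin d))) = ⊤ := by
    rw [← direction_affineSpan, htop, AffineSubspace.direction_top]
  -- inner products
  have key : ∀ p ∈ τ, ∀ q ∈ τ,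
      (inner ℝ (p - q) (z' - z) : ℝ) = 0 := by
    intro p hp q hq
    have e1 := h.2 p hp
    have e2 := h'.2 p hp
    have e3 := h.2 q hq
    have e4 := h'.2 q hq
    have n1 : ‖z - p‖ ^ 2 = ‖z‖^2 - 2 * inner ℝ z p + ‖p‖^2 := norm_sub_sq_real z p
    have n2 : ‖z' - p‖ ^ 2 = ‖z'‖^2 - 2 * inner ℝ z' p + ‖p‖^2 := norm_sub_sq_real z' p
    have n3 : ‖z - q‖ ^ 2 = ‖z‖^2 - 2 * inner ℝ z q + ‖q‖^2 := norm_sub_sq_real z q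
    have n4 : ‖z' - q‖ ^ 2 = ‖z'‖^2 - 2 * inner ℝ z' q + ‖q‖^2 := norm_sub_sq_real z' q
    have expand : (inner ℝ (p - q) (z' - z) : ℝ)
        = inner ℝ z' p - inner ℝ z p - inner ℝ z' q + inner ℝ z q := by
      rw [inner_sub_left, inner_sub_right, inner_sub_right,
        real_inner_comm p z', real_inner_comm p z, real_inner_comm q z', real_inner_comm q z]
      ring
    rw [expand]
    linarith
  have hz : z' - z = 0 := by
    have hle : vectorSpan ℝ (↑τ : Set (EuclideanSpace ℝ (Fin d)))
        ≤ (Submodule.span ℝ {z' - z})ᗮ := by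
      rw [vectorSpan_def]
      apply Submodule.span_le.mpr
      rintro x ⟨p, hp, q, hq, rfl⟩
      rw [SetLike.mem_coe, Submodule.mem_orthogonal_singleton_iff_inner_left]
      exact key p hp q hq
    have hmem : z' - z ∈ (Submodule.span ℝ {z' - z})ᗮ := by
      apply hle
      rw [hvs]; trivial
    have := (Submodule.mem_orthogonal _ _).mp hmem (z' - z)
      (Submodule.mem_span_singleton_self _)
    exact inner_self_eq_zero.mp this
  have hzz : z = z' := by
    have := sub_eq_zero.mp hz; exact this.symm
  refine ⟨hzz, ?_⟩
  obtain ⟨p, hp⟩ : ∃ p, p ∈ τ := Finset.card_pos.mp (by omega)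
  have e1 := h.2 p hp
  have e2 := h'.2 p hp
  rw [hzz] at e1
  linarith

/-- If `P ⊆ ℝ^d` is `M`-separated and `2M`-syndetic, `w ∈ 𝒲` and `τ ∈ Del(P,w)`
has orthosphere `(z,u)`, then `u < 4M²`, `‖z - p‖² < 5M²` for every `p ∈ τ`,
and `‖p - q‖ < 2√5·M` for all `p, q ∈ τ`. -/
theorem stmt4 (hd : 1 ≤ d) (M : ℝ) (hM : 0 < M)
    (P : Set (EuclideanSpace ℝ (Fin d)))
    (hsep : IsSeparatedSet M P) (hsyn : IsSyndeticSet (2 * M) P)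
    (w : EuclideanSpace ℝ (Fin d) → ℝ) (hw : w ∈ WeightFns M P)
    (τ : Finset (EuclideanSpace ℝ (Fin d))) (hτ : τ ∈ Del P w)
    (z : EuclideanSpace ℝ (Fin d)) (u : ℝ) (ho : IsOrthosphere τ w z u) :
    u < 4 * M ^ 2 ∧ (∀ p ∈ τ, ‖z - p‖ ^ 2 < 5 * M ^ 2) ∧
      ∀ p ∈ τ, ∀ q ∈ τ, ‖p - q‖ < 2 * Real.sqrt 5 * M := by
  obtain ⟨⟨hcard, hsub, hind⟩, z', u', ho', hempty⟩ := hτ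
  obtain ⟨hz, hu⟩ := ortho_unique τ hcard hind w ho ho'
  subst hz; subst hu
  -- syndeticity at z
  obtain ⟨p₀, hp₀P, hp₀d⟩ := hsyn z
  have hw₀ := hw p₀ hp₀P
  have hemp₀ := hempty p₀ hp₀P
  have hdist : ‖z - p₀‖ < 2 * M := by rwa [← dist_eq_norm]
  have hnn : (0:ℝ) ≤ ‖z - p₀‖ := norm_nonneg _
  have hu4 : u < 4 * M ^ 2 := by nlinarith [hw₀.1]
  have hball : ∀ p ∈ τ, ‖z - p‖ ^ 2 < 5 * M ^ 2 := by
    intro p hp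
    have := ho.2 p hp
    have hwp := hw p (hsub hp)
    nlinarith [hwp.2]
  refine ⟨hu4, hball, ?_⟩
  intro p hp q hq
  have h1 := hball p hp
  have h2 := hball q hq
  have hs5 : Real.sqrt 5 ^ 2 = 5 := Real.sq_sqrt (by norm_num)
  have hs5n : (0:ℝ) ≤ Real.sqrt 5 := Real.sqrt_nonneg 5
  have b1 : ‖z - p‖ < Real.sqrt 5 * M :=
    lt_of_pow_lt_pow_left₀ 2 (mul_nonneg hs5n hM.le) (by rw [mul_pow, hs5]; linarith)
  have b2 : ‖z - q‖ < Real.sqrt 5 * M :=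
    lt_of_pow_lt_pow_left₀ 2 (mul_nonneg hs5n hM.le) (by rw [mul_pow, hs5]; linarith)
  calc ‖p - q‖ = ‖(z - q) - (z - p)‖ := by congr 1; abel
    _ ≤ ‖z - q‖ + ‖z - p‖ := norm_sub_le _ _
    _ < 2 * Real.sqrt 5 * M := by linarith
end
end

section
/- Let d ≥ 1, M > 0, let P ⊆ ℝ^d be M-separated and 2M-syndetic, and let 1 ≤ k ≤ d. Suppose p₁, p₂ ∈ P satisfy (P − p₁) ∩ B(0, 2√5·M) = (P − p₂) ∩ B(0, 2√5·M). If τ ∈ D_k contains p₁, then τ − p₁ + p₂ ∈ D_k. -/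
noncomputable section

open scoped Classical

open Metric

variable {d : ℕ}

/-- `D_k`: those `τ ∈ Δ_k(P)` contained in some `τ' ∈ Del(P,w)` for some `w ∈ 𝒲`. -/
def DSet (M : ℝ) (P : Set (EuclideanSpace ℝ (Fin d))) (k : ℕ) :
    Set (Finset (EuclideanSpace ℝ (Fin d))) :=
  {τ | τ ∈ DeltaK k P ∧ ∃ w ∈ WeightFns M P, ∃ τ' ∈ Del P w, τ ⊆ τ'}

/-- `D_k` is locally derived from `P`: if `p₁, p₂ ∈ P` have the same pattern of `P`
in the ball of radius `2√5·M`, and `τ ∈ D_k` contains `p₁`, then `τ - p₁ + p₂ ∈ D_k`. -/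
theorem stmt5 (hd : 1 ≤ d) (M : ℝ) (hM : 0 < M)
    (P : Set (EuclideanSpace ℝ (Fin d)))
    (hsep : IsSeparatedSet M P) (hsyn : IsSyndeticSet (2 * M) P)
    (k : ℕ) (hk1 : 1 ≤ k) (hkd : k ≤ d)
    (p₁ p₂ : EuclideanSpace ℝ (Fin d)) (hp₁ : p₁ ∈ P) (hp₂ : p₂ ∈ P)
    (hpat : ((fun q => q - p₁) '' P) ∩ ball (0 : EuclideanSpace ℝ (Fin d)) (2 * Real.sqrt 5 * M)
      = ((fun q => q - p₂) '' P) ∩ ball (0 : EuclideanSpace ℝ (Fin d)) (2 * Real.sqrt 5 * M))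
    (τ : Finset (EuclideanSpace ℝ (Fin d))) (hτ : τ ∈ DSet M P k) (hmem : p₁ ∈ τ) :
    τ.image (fun q => q - p₁ + p₂) ∈ DSet M P k := by
  classical
  obtain ⟨⟨hcard, hsubP, hai⟩, w, hwW, τ', ⟨⟨hcard', hsubP', hai'⟩, z, u, ⟨hzspan, hsph⟩, hemp⟩,
    hττ'⟩ := hτ
  set t : EuclideanSpace ℝ (Fin d) := p₂ - p₁ with ht
  have hTeq : (fun q : EuclideanSpace ℝ (Fin d) => q - p₁ + p₂) = (fun q => t +ᵥ q) := by
    funext q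
    show q - p₁ + p₂ = t + q
    rw [ht]; abel
  have hinj : Function.Injective (fun q : EuclideanSpace ℝ (Fin d) => t +ᵥ q) :=
    fun a b h => by simpa using h
  -- numeric facts
  have hs5 : (2.2 : ℝ) < Real.sqrt 5 := by
    rw [Real.lt_sqrt (by norm_num)]; norm_num
  -- bound on u
  have hu : u < 4 * M ^ 2 := by
    obtain ⟨q, hqP, hq⟩ := hsyn z
    have h1 := hemp q hqP
    have h2 := (hwW q hqP).1
    have h3 : ‖z - q‖ ^ 2 < (2 * M) ^ 2 := by
      have : ‖z - q‖ < 2 * M := by rw [← dist_eq_norm]; exact hq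
      have h0 : (0:ℝ) ≤ ‖z - q‖ := norm_nonneg _
      nlinarith
    nlinarith
  -- points of τ' are close to z
  have hclose : ∀ p ∈ τ', ‖z - p‖ < 2.03 * M := by
    intro p hp
    have h1 := hsph p hp
    have h2 := (hwW p (hsubP' hp)).2
    have h3 : ‖z - p‖ ^ 2 < (2.03 * M) ^ 2 := by nlinarith
    have h0 : (0:ℝ) ≤ 2.03 * M := by positivity
    exact lt_of_pow_lt_pow_left₀ 2 h0 h3
  have hp₁τ' : p₁ ∈ τ' := hττ' hmem
  have hzp₁ : ‖z - p₁‖ < 2.03 * M := hclose p₁ hp₁τ'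
  -- membership transfer lemmas
  have hfwd : ∀ q ∈ P, dist q p₁ < 2 * Real.sqrt 5 * M → q + t ∈ P := by
    intro q hq hlt
    have hmem1 : q - p₁ ∈ ((fun q => q - p₂) '' P) ∩ ball (0 : EuclideanSpace ℝ (Fin d))
        (2 * Real.sqrt 5 * M) := by
      rw [← hpat]
      refine ⟨⟨q, hq, rfl⟩, ?_⟩
      rw [mem_ball, dist_zero_right, ← dist_eq_norm]
      exact hlt
    obtain ⟨q', hq', hq'eq⟩ := hmem1.1
    have hq'' : q' = q + t := by
      rw [sub_eq_iff_eq_add] at hq'eq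
      rw [hq'eq, ht]; abel
    rwa [hq''] at hq'
  have hbwd : ∀ q ∈ P, dist q p₂ < 2 * Real.sqrt 5 * M → q - t ∈ P := by
    intro q hq hlt
    have hmem1 : q - p₂ ∈ ((fun q => q - p₁) '' P) ∩ ball (0 : EuclideanSpace ℝ (Fin d))
        (2 * Real.sqrt 5 * M) := by
      rw [hpat]
      refine ⟨⟨q, hq, rfl⟩, ?_⟩
      rw [mem_ball, dist_zero_right, ← dist_eq_norm]
      exact hlt
    obtain ⟨q', hq', hq'eq⟩ := hmem1.1
    have hq'' : q' = q - t := by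
      rw [sub_eq_iff_eq_add] at hq'eq
      rw [hq'eq, ht]; abel
    rwa [hq''] at hq'
  -- points of τ' translate into P
  have hτ'trans : ∀ q ∈ τ', q + t ∈ P := by
    intro q hq
    refine hfwd q (hsubP' hq) ?_
    have h1 : dist q p₁ ≤ dist q z + dist z p₁ := dist_triangle _ _ _
    have h2 : dist q z < 2.03 * M := by rw [dist_comm, dist_eq_norm]; exact hclose q hq
    have h3 : dist z p₁ < 2.03 * M := by rw [dist_eq_norm]; exact hzp₁
    nlinarith
  -- new weight function
  set w' : EuclideanSpace ℝ (Fin d) → ℝ := fun p => if p - t ∈ P then w (p - t) else 0 with hw'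
  have hw'W : w' ∈ WeightFns M P := by
    intro p hp
    by_cases hpt : p - t ∈ P
    · simpa [hw', hpt] using hwW _ hpt
    · simp only [hw', hpt, if_neg, if_false]
      exact ⟨le_refl 0, by positivity⟩
  -- image sets
  have himg : ∀ (s : Finset (EuclideanSpace ℝ (Fin d))),
      ((s.image (fun q => q - p₁ + p₂) : Finset _) : Set (EuclideanSpace ℝ (Fin d)))
        = (fun q => t +ᵥ q) '' (s : Set _) := by
    intro s
    rw [Finset.coe_image, hTeq]
  have hDelta : ∀ (s : Finset (EuclideanSpace ℝ (Fin d))) (m : ℕ), s ∈ DeltaK m P →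
      (∀ q ∈ s, q + t ∈ P) → s.image (fun q => q - p₁ + p₂) ∈ DeltaK m P := by
    intro s m ⟨hc, hsub, hais⟩ htrans
    refine ⟨?_, ?_, ?_⟩
    · rw [hTeq, Finset.card_image_of_injective _ hinj, hc]
    · intro x hx
      rw [himg] at hx
      obtain ⟨q, hq, rfl⟩ := hx
      show t + q ∈ P
      rw [add_comm]
      exact htrans q hq
    · rw [himg]
      exact (AffineEquiv.affineIndependent_set_of_eq_iff
        (AffineEquiv.constVAdd ℝ (EuclideanSpace ℝ (Fin d)) t)).mpr hais
  have hτ'trans' : ∀ q ∈ τ, q + t ∈ P := fun q hq => hτ'trans q (hττ' hq)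
  refine ⟨hDelta τ k ⟨hcard, hsubP, hai⟩ hτ'trans', w', hw'W,
    τ'.image (fun q => q - p₁ + p₂), ⟨hDelta τ' d ⟨hcard', hsubP', hai'⟩ hτ'trans,
      z + t, u, ⟨?_, ?_⟩, ?_⟩, Finset.image_subset_image hττ'⟩
  · -- orthosphere center in affine span
    rw [himg]
    have : affineSpan ℝ ((fun q => t +ᵥ q) '' (τ' : Set (EuclideanSpace ℝ (Fin d))))
        = (affineSpan ℝ (τ' : Set (EuclideanSpace ℝ (Fin d)))).map
          (AffineEquiv.constVAdd ℝ (EuclideanSpace ℝ (Fin d)) t).toAffineMap := by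
      rw [AffineSubspace.map_span]
      rfl
    rw [this]
    refine AffineSubspace.mem_map.mpr ⟨z, hzspan, ?_⟩
    show t + z = z + t
    rw [add_comm]
  · -- sphere equation
    intro p hp
    rw [Finset.mem_image] at hp
    obtain ⟨q, hq, rfl⟩ := hp
    have hqP : q ∈ P := hsubP' hq
    have h1 : z + t - (q - p₁ + p₂) = z - q := by rw [ht]; abel
    have h2 : q - p₁ + p₂ - t = q := by rw [ht]; abel
    have hw'q : w' (q - p₁ + p₂) = w q := by
      simp only [hw', h2]
      rw [if_pos hqP]
    rw [h1, hw'q]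
    exact hsph q hq
  · -- emptiness
    intro p hp
    by_cases hpt : p - t ∈ P
    · have h1 : z + t - p = z - (p - t) := by abel
      have hw'p : w' p = w (p - t) := by simp only [hw']; rw [if_pos hpt]
      rw [h1, hw'p]
      exact hemp _ hpt
    · have hw'p : w' p = 0 := by simp only [hw']; rw [if_neg hpt]
      rw [hw'p]
      by_contra hcon
      push_neg at hcon
      have h1 : ‖z + t - p‖ ^ 2 < u := by linarith
      have h2 : ‖z + t - p‖ < 2 * M := by
        have h0 : (0:ℝ) ≤ 2 * M := by positivity
        refine lt_of_pow_lt_pow_left₀ 2 h0 ?_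
        nlinarith
      have h3 : dist p p₂ < 2 * Real.sqrt 5 * M := by
        have ht1 : dist p p₂ ≤ dist p (z + t) + dist (z + t) p₂ := dist_triangle _ _ _
        have ht2 : dist p (z + t) < 2 * M := by
          rw [dist_comm, dist_eq_norm]; exact h2
        have ht3 : dist (z + t) p₂ < 2.03 * M := by
          rw [dist_eq_norm, show z + t - p₂ = z - p₁ from by rw [ht]; abel]
          exact hzp₁
        have h45 : 4.4 * M ≤ 2 * Real.sqrt 5 * M := by
          have := mul_le_mul_of_nonneg_right (le_of_lt hs5) (le_of_lt hM)
          linarith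
        linarith
      exact hpt (hbwd p hp h3)
end
end

section
/- Let d ≥ 2 and set c₁ = (72·10^{d²}·d)^{−1}. Let M > 0 and let P ⊆ ℝ^d be M-separated and 2M-syndetic. Then for every p ∈ P and every w ∈ 𝒲 there exists an open subset I(p,w) ⊆ ℝ such that: (1) [0,(M/3)²] ∖ I(p,w) is non-empty; (2) for every 1 ≤ k < d and every τ ∈ D_k with τ ∪ {p} ∈ D_{k+1} and dist(p, H(τ)) ≤ c₁·M, if w' ∈ 𝒲 satisfies w'(q) = w(q) for all q ∈ τ and w'(p) ∉ I(p,w), then there is no τ̃ ∈ Del(P,w') with τ ∪ {p} ⊆ τ̃. -/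
noncomputable section

open scoped Classical

open Metric

variable {d : ℕ}

open Finset MeasureTheory ENNReal
open scoped RealInnerProductSpace

/- ### Auxiliary counting lemmas -/

lemma sliver_geom_sum_le (n : ℕ) (hn : 2 ≤ n) :
    ∀ dd : ℕ, 2 ≤ dd → (∑ j ∈ Finset.Icc 2 dd, n ^ j) ≤ 2 * n ^ dd := by
  intro dd hdd
  induction dd with
  | zero => omega
  | succ m ih =>
    rcases Nat.lt_or_ge m 2 with hm | hm
    · interval_cases m
      · omega
      · simp [show Finset.Icc 2 2 = {2} from rfl]
        omega
    · rw [Finset.sum_Icc_succ_top (by omega : 2 ≤ m + 1)]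
      have h1 := ih hm
      have h2 : 2 * n ^ m ≤ n ^ (m + 1) := by
        have : 2 * n ^ m ≤ n * n ^ m := Nat.mul_le_mul_right _ hn
        have hp : n * n ^ m = n ^ (m + 1) := by ring
        omega
      have h3 : n ^ (m+1) + n ^ (m+1) = 2 * n ^ (m+1) := by ring
      omega

lemma sliver_choose_sum_le {n dd : ℕ} (hn : 2 ≤ n) (hdd : 2 ≤ dd) :
    (∑ j ∈ Finset.Icc 2 dd, n.choose j) ≤ n ^ dd := by
  have h1 : 2 * ∑ j ∈ Finset.Icc 2 dd, n.choose j ≤ ∑ j ∈ Finset.Icc 2 dd, n ^ j := by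
    rw [Finset.mul_sum]
    apply Finset.sum_le_sum
    intro j hj
    have hj2 : 2 ≤ j := (Finset.mem_Icc.mp hj).1
    have hfac : 2 ≤ Nat.factorial j := le_trans hj2 (Nat.self_le_factorial j)
    have c1 : 2 * n.choose j ≤ Nat.factorial j * n.choose j := Nat.mul_le_mul_right _ hfac
    have c2 : Nat.factorial j * n.choose j = n.descFactorial j :=
      (Nat.descFactorial_eq_factorial_mul_choose n j).symm
    have c3 : n.descFactorial j ≤ n ^ j := Nat.descFactorial_le_pow n j
    omega
  have h2 := sliver_geom_sum_le n hn dd hdd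
  omega

/- ### Packing bounds for separated sets -/

lemma sliver_packing_card {d : ℕ} {M R : ℝ} (hM : 0 < M) (hR : 0 ≤ R)
    {P : Set (EuclideanSpace ℝ (Fin d))} (hsep : IsSeparatedSet M P)
    (p : EuclideanSpace ℝ (Fin d)) (T : Finset (EuclideanSpace ℝ (Fin d)))
    (hT : ↑T ⊆ P ∩ closedBall p R) :
    (T.card : ℝ) * (M / 2) ^ d ≤ (R + M / 2) ^ d := by
  have hM2 : (0:ℝ) < M / 2 := by linarith
  have hdisj : (↑T : Set (EuclideanSpace ℝ (Fin d))).PairwiseDisjoint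
      (fun q => ball q (M/2)) := by
    intro a ha b hb hab
    have h := hsep a (hT ha).1 b (hT hb).1 hab
    exact ball_disjoint_ball (by linarith)
  have hsub : (⋃ q ∈ T, ball q (M/2)) ⊆ closedBall p (R + M/2) := by
    intro x hx
    simp only [Set.mem_iUnion] at hx
    obtain ⟨q, hq, hxq⟩ := hx
    have h1 : dist q p ≤ R := (hT hq).2
    have h2 : dist x q < M / 2 := mem_ball.mp hxq
    have : dist x p ≤ dist x q + dist q p := dist_triangle _ _ _
    exact mem_closedBall.mpr (by linarith)
  have key : (∑ q ∈ T, volume (ball q (M/2))) ≤ volume (closedBall p (R + M/2)) := by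
    rw [← measure_biUnion_finset hdisj (fun b _ => measurableSet_ball)]
    exact measure_mono hsub
  rw [Measure.addHaar_closedBall _ _ (by linarith : (0:ℝ) ≤ R + M/2)] at key
  simp only [Measure.addHaar_ball_of_pos _ _ hM2, finrank_euclideanSpace_fin] at key
  rw [Finset.sum_const, nsmul_eq_mul, ← mul_assoc] at key
  set B := volume (ball (0 : EuclideanSpace ℝ (Fin d)) 1) with hB
  have hB0 : B ≠ 0 := (measure_ball_pos _ _ one_pos).ne'
  have hBt : B ≠ ⊤ := measure_ball_lt_top.ne
  have key2 : (T.card : ℝ≥0∞) * ENNReal.ofReal ((M/2)^d) ≤ ENNReal.ofReal ((R+M/2)^d) :=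
    (ENNReal.mul_le_mul_iff_left hB0 hBt).mp key
  rw [← ENNReal.ofReal_natCast, ← ENNReal.ofReal_mul (by positivity)] at key2
  exact (ENNReal.ofReal_le_ofReal_iff (by positivity)).mp key2

lemma sliver_ball_finite {d : ℕ} {M R : ℝ} (hM : 0 < M) (hR : 0 ≤ R)
    {P : Set (EuclideanSpace ℝ (Fin d))} (hsep : IsSeparatedSet M P)
    (p : EuclideanSpace ℝ (Fin d)) :
    (P ∩ closedBall p R).Finite := by
  by_contra hinf
  have hinf' : (P ∩ closedBall p R).Infinite := hinf
  obtain ⟨T, hTsub, hTcard⟩ :=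
    hinf'.exists_subset_card_eq (⌊((R + M/2)/(M/2))^d⌋₊ + 1)
  have hb := sliver_packing_card hM hR hsep p T hTsub
  have hM2 : (0:ℝ) < (M/2)^d := by positivity
  have h1 : (T.card : ℝ) ≤ ((R + M/2)/(M/2))^d := by
    rw [div_pow, le_div_iff₀ hM2]
    exact hb
  have h2 := Nat.lt_floor_add_one (((R + M/2)/(M/2))^d)
  rw [hTcard] at h1
  push_cast at h1
  linarith

/- ### Geometric estimates for empty orthospheres -/

lemma sliver_radius_bound {d : ℕ} {M : ℝ} (hM : 0 < M)
    {P : Set (EuclideanSpace ℝ (Fin d))} (hsyn : IsSyndeticSet (2 * M) P)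
    {w' : EuclideanSpace ℝ (Fin d) → ℝ} {z : EuclideanSpace ℝ (Fin d)} {u : ℝ}
    (hw' : w' ∈ WeightFns M P) (hemp : IsEmptySphere P w' z u)
    {x : EuclideanSpace ℝ (Fin d)} (hxP : x ∈ P) (hx : ‖z - x‖ ^ 2 = u + w' x) :
    ‖z - x‖ ≤ 51 / 25 * M := by
  obtain ⟨q, hqP, hq⟩ := hsyn z
  have h1 := hemp q hqP
  have h2 := (hw' q hqP).1
  have h3 := (hw' x hxP).2
  rw [dist_eq_norm] at hq
  have h4 : ‖z - q‖ ^ 2 < (2 * M) ^ 2 := by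
    have := norm_nonneg (z - q)
    nlinarith
  have h5 : ‖z - x‖ ^ 2 ≤ 4 * M ^ 2 + (M / 3) ^ 2 := by nlinarith
  nlinarith [norm_nonneg (z - x)]

lemma sliver_key_diff {d : ℕ} {M : ℝ} (hM : 0 < M)
    {P : Set (EuclideanSpace ℝ (Fin d))} (hsyn : IsSyndeticSet (2 * M) P)
    {p : EuclideanSpace ℝ (Fin d)} {τ : Finset (EuclideanSpace ℝ (Fin d))}
    (hτP : ↑τ ⊆ P) {q₀ : EuclideanSpace ℝ (Fin d)} (hq₀ : q₀ ∈ τ) {c : ℝ}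
    (hdist : Metric.infDist p (affineSpan ℝ (↑τ : Set (EuclideanSpace ℝ (Fin d)))
        : Set (EuclideanSpace ℝ (Fin d))) ≤ c)
    {w₁ w₂ : EuclideanSpace ℝ (Fin d) → ℝ}
    (hw₁ : w₁ ∈ WeightFns M P) (hw₂ : w₂ ∈ WeightFns M P)
    (hagree : ∀ q ∈ τ, w₁ q = w₂ q)
    {z₁ z₂ : EuclideanSpace ℝ (Fin d)} {u₁ u₂ : ℝ}
    (h₁ : ∀ x ∈ insert p τ, ‖z₁ - x‖ ^ 2 = u₁ + w₁ x)
    (h₂ : ∀ x ∈ insert p τ, ‖z₂ - x‖ ^ 2 = u₂ + w₂ x)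
    (he₁ : IsEmptySphere P w₁ z₁ u₁) (he₂ : IsEmptySphere P w₂ z₂ u₂) :
    |w₁ p - w₂ p| ≤ 204 / 25 * M * c := by
  have hq₀P : q₀ ∈ P := hτP hq₀
  have hq₀i : q₀ ∈ insert p τ := Finset.mem_insert_of_mem hq₀
  have hr₁ : ‖z₁ - q₀‖ ≤ 51 / 25 * M :=
    sliver_radius_bound hM hsyn hw₁ he₁ hq₀P (h₁ q₀ hq₀i)
  have hr₂ : ‖z₂ - q₀‖ ≤ 51 / 25 * M :=
    sliver_radius_bound hM hsyn hw₂ he₂ hq₀P (h₂ q₀ hq₀i)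
  have hvnorm : ‖z₁ - z₂‖ ≤ 102 / 25 * M := by
    have heq : z₁ - z₂ = (z₁ - q₀) - (z₂ - q₀) := by abel
    rw [heq]
    calc ‖(z₁ - q₀) - (z₂ - q₀)‖ ≤ ‖z₁ - q₀‖ + ‖z₂ - q₀‖ := norm_sub_le _ _
      _ ≤ 102 / 25 * M := by linarith
  set v := z₁ - z₂ with hvdef
  have key : ∀ q ∈ τ, 2 * ⟪v, q⟫ = ‖z₁‖ ^ 2 - ‖z₂‖ ^ 2 - u₁ + u₂ := by
    intro q hq
    have e₁ := h₁ q (Finset.mem_insert_of_mem hq)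
    have e₂ := h₂ q (Finset.mem_insert_of_mem hq)
    have ha := hagree q hq
    have E₁ : ‖z₁ - q‖ ^ 2 = ‖z₁‖ ^ 2 - 2 * ⟪z₁, q⟫ + ‖q‖ ^ 2 := norm_sub_sq_real z₁ q
    have E₂ : ‖z₂ - q‖ ^ 2 = ‖z₂‖ ^ 2 - 2 * ⟪z₂, q⟫ + ‖q‖ ^ 2 := norm_sub_sq_real z₂ q
    have hs : ⟪v, q⟫ = ⟪z₁, q⟫ - ⟪z₂, q⟫ := by rw [hvdef, inner_sub_left]
    linarith
  have hinner : ∀ q ∈ (↑τ : Set (EuclideanSpace ℝ (Fin d))), ⟪v, q⟫ = ⟪v, q₀⟫ := by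
    intro q hq
    have h1 := key q (Finset.mem_coe.mp hq)
    have h2 := key q₀ hq₀
    linarith
  have hspan : ∀ y ∈ affineSpan ℝ (↑τ : Set (EuclideanSpace ℝ (Fin d))),
      ⟪v, y⟫ = ⟪v, q₀⟫ := by
    intro y hy
    refine affineSpan_induction (p := fun y => ⟪v, y⟫ = ⟪v, q₀⟫) hy hinner ?_
    intro t a b e ha hb he'
    have heq : (t • (a -ᵥ b) +ᵥ e) = t • (a - b) + e := by rw [vsub_eq_sub, vadd_eq_add]
    rw [heq, inner_add_right, inner_smul_right, inner_sub_right, ha, hb, he']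
    ring
  have hclosed : IsClosed ((affineSpan ℝ (↑τ : Set (EuclideanSpace ℝ (Fin d))))
      : Set (EuclideanSpace ℝ (Fin d))) :=
    AffineSubspace.closed_of_finiteDimensional _
  have hne : ((affineSpan ℝ (↑τ : Set (EuclideanSpace ℝ (Fin d))))
      : Set (EuclideanSpace ℝ (Fin d))).Nonempty :=
    ⟨q₀, subset_affineSpan ℝ _ (Finset.mem_coe.mpr hq₀)⟩
  obtain ⟨p', hp'mem, hp'd⟩ := hclosed.exists_infDist_eq_dist hne p
  have hc0 : 0 ≤ c := le_trans Metric.infDist_nonneg hdist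
  have hdpp' : ‖p' - p‖ ≤ c := by
    rw [norm_sub_rev, ← dist_eq_norm]
    rw [← hp'd]
    exact hdist
  have ep₁ := h₁ p (Finset.mem_insert_self _ _)
  have ep₂ := h₂ p (Finset.mem_insert_self _ _)
  have E₁ : ‖z₁ - p‖ ^ 2 = ‖z₁‖ ^ 2 - 2 * ⟪z₁, p⟫ + ‖p‖ ^ 2 := norm_sub_sq_real z₁ p
  have E₂ : ‖z₂ - p‖ ^ 2 = ‖z₂‖ ^ 2 - 2 * ⟪z₂, p⟫ + ‖p‖ ^ 2 := norm_sub_sq_real z₂ p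
  have hsp : ⟪v, p⟫ = ⟪z₁, p⟫ - ⟪z₂, p⟫ := by rw [hvdef, inner_sub_left]
  have hq0c := key q₀ hq₀
  have hp'c := hspan p' hp'mem
  have hsub : ⟪v, p' - p⟫ = ⟪v, p'⟫ - ⟪v, p⟫ := inner_sub_right v p' p
  have hid : w₁ p - w₂ p = 2 * ⟪v, p' - p⟫ := by linarith
  rw [hid]
  have habs := abs_real_inner_le_norm v (p' - p)
  have hnv : 0 ≤ ‖v‖ := norm_nonneg v
  have hnp : 0 ≤ ‖p' - p‖ := norm_nonneg _
  rw [abs_mul, abs_two]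
  have hfin : |⟪v, p' - p⟫| ≤ (102 / 25 * M) * c := by
    calc |⟪v, p' - p⟫| ≤ ‖v‖ * ‖p' - p‖ := habs
      _ ≤ (102 / 25 * M) * c := by nlinarith
  linarith

/- ### Achievable weight values -/

/-- `a` is an achievable weight for `p` over the simplex `σ`. -/
def SliverAch {d : ℕ} (M : ℝ) (P : Set (EuclideanSpace ℝ (Fin d)))
    (p : EuclideanSpace ℝ (Fin d)) (w : EuclideanSpace ℝ (Fin d) → ℝ)
    (σ : Finset (EuclideanSpace ℝ (Fin d))) (a : ℝ) : Prop :=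
  ∃ w' ∈ WeightFns M P, (∀ q ∈ σ, w' q = w q) ∧ w' p = a ∧
    ∃ τ' ∈ Del P w', insert p σ ⊆ τ'

/-- A choice of achievable weight value, when one exists. -/
def SliverA {d : ℕ} (M : ℝ) (P : Set (EuclideanSpace ℝ (Fin d)))
    (p : EuclideanSpace ℝ (Fin d)) (w : EuclideanSpace ℝ (Fin d) → ℝ)
    (σ : Finset (EuclideanSpace ℝ (Fin d))) : ℝ :=
  if h : ∃ a, SliverAch M P p w σ a then h.choose else 0

lemma SliverA_spec {d : ℕ} {M : ℝ} {P : Set (EuclideanSpace ℝ (Fin d))}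
    {p : EuclideanSpace ℝ (Fin d)} {w : EuclideanSpace ℝ (Fin d) → ℝ}
    {σ : Finset (EuclideanSpace ℝ (Fin d))}
    (h : ∃ a, SliverAch M P p w σ a) :
    SliverAch M P p w σ (SliverA M P p w σ) := by
  unfold SliverA
  rw [dif_pos h]
  exact h.choose_spec

/-- Sliver proposition: with `c₁ = (72·10^{d²}·d)⁻¹`, for every `p ∈ P` and `w ∈ 𝒲`
there is an open set `I(p,w) ⊆ ℝ` with `[0,(M/3)²] ∖ I(p,w)` non-empty, such that
for all `1 ≤ k < d` and `τ ∈ D_k` with `τ ∪ {p} ∈ D_{k+1}` and `d(p,H(τ)) ≤ c₁·M`,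
if `w' ∈ 𝒲` agrees with `w` on `τ` and `w'(p) ∉ I(p,w)`, then no cell of
`Del(P,w')` contains `τ ∪ {p}`. -/
theorem stmt7 (hd : 2 ≤ d) (M : ℝ) (hM : 0 < M)
    (P : Set (EuclideanSpace ℝ (Fin d)))
    (hsep : IsSeparatedSet M P) (hsyn : IsSyndeticSet (2 * M) P)
    (p : EuclideanSpace ℝ (Fin d)) (hp : p ∈ P)
    (w : EuclideanSpace ℝ (Fin d) → ℝ) (hw : w ∈ WeightFns M P) :
    ∃ I : Set ℝ, IsOpen I ∧
      (Set.Icc (0 : ℝ) ((M / 3) ^ 2) \ I).Nonempty ∧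
      ∀ k : ℕ, 1 ≤ k → k < d →
        ∀ τ ∈ DSet M P k, insert p τ ∈ DSet M P (k + 1) →
          Metric.infDist p (affineSpan ℝ (↑τ : Set (EuclideanSpace ℝ (Fin d)))
              : Set (EuclideanSpace ℝ (Fin d)))
            ≤ (72 * 10 ^ (d ^ 2) * (d : ℝ))⁻¹ * M →
          ∀ w' ∈ WeightFns M P, (∀ q ∈ τ, w' q = w q) → w' p ∉ I →
            ¬∃ τ' ∈ Del P w', insert p τ ⊆ τ' := by
  classical
  have hd0 : (0:ℝ) < (d:ℝ) := by exact_mod_cast Nat.lt_of_lt_of_le Nat.zero_lt_two hd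
  set D : ℝ := 72 * 10 ^ (d ^ 2) * (d : ℝ) with hDdef
  have h10 : (0:ℝ) < 10 ^ (d ^ 2) := by positivity
  have hD : 0 < D := by
    rw [hDdef]
    exact mul_pos (mul_pos (by norm_num) h10) hd0
  have hDinvpos : 0 < D⁻¹ := inv_pos.mpr hD
  set R : ℝ := 204 / 50 * M with hRdef
  have hR0 : (0:ℝ) ≤ R := by rw [hRdef]; linarith
  have hfin : (P ∩ closedBall p R).Finite := sliver_ball_finite hM hR0 hsep p
  set Sfin : Finset (EuclideanSpace ℝ (Fin d)) := hfin.toFinset.erase p with hSdef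
  set 𝒯 : Finset (Finset (EuclideanSpace ℝ (Fin d))) :=
    (Finset.Icc 2 d).biUnion (fun j => Sfin.powersetCard j) with hTdef
  set ε : ℝ := 9 * D⁻¹ * M ^ 2 with hεdef
  have hε : 0 < ε := by rw [hεdef]; positivity
  -- the cardinality bound
  have hcard : (𝒯.card : ℝ) * 162 < D := by
    have hpack := sliver_packing_card hM hR0 hsep p hfin.toFinset
      (by rw [Set.Finite.coe_toFinset])
    have hnle : Sfin.card ≤ hfin.toFinset.card := by
      rw [hSdef]; exact Finset.card_erase_le
    have hRM : R + M/2 = 229/25 * (M/2) := by rw [hRdef]; ring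
    have hn2 : (Sfin.card : ℝ) ≤ (229/25)^d := by
      have h1 : (Sfin.card : ℝ) * (M/2)^d ≤ (R + M/2)^d := by
        refine le_trans ?_ hpack
        have : (Sfin.card : ℝ) ≤ (hfin.toFinset.card : ℝ) := by exact_mod_cast hnle
        have hMp : (0:ℝ) < (M/2)^d := by positivity
        nlinarith
      rw [hRM, mul_pow] at h1
      have hMp : (0:ℝ) < (M/2)^d := by positivity
      exact le_of_mul_le_mul_right h1 hMp
    have hTcard : 𝒯.card ≤ ∑ j ∈ Finset.Icc 2 d, Sfin.card.choose j := by
      rw [hTdef]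
      refine le_trans Finset.card_biUnion_le (le_of_eq ?_)
      exact Finset.sum_congr rfl fun j _ => Finset.card_powersetCard j Sfin
    by_cases hn : 2 ≤ Sfin.card
    · have h3 : 𝒯.card ≤ Sfin.card ^ d := le_trans hTcard (sliver_choose_sum_le hn hd)
      have h4 : (𝒯.card : ℝ) ≤ ((229:ℝ)/25) ^ (d * d) := by
        calc (𝒯.card : ℝ) ≤ ((Sfin.card : ℝ)) ^ d := by exact_mod_cast h3
          _ ≤ (((229:ℝ)/25) ^ d) ^ d := pow_le_pow_left₀ (Nat.cast_nonneg _) hn2 d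
          _ = ((229:ℝ)/25) ^ (d * d) := (pow_mul _ d d).symm
      have h5 : ((229:ℝ)/25) ^ (d * d) * 162 < D := by
        have hdd4 : 4 ≤ d * d := Nat.mul_le_mul hd hd
        have h6 : ((229:ℝ)/250) ^ (d * d) ≤ ((229:ℝ)/250) ^ 4 :=
          pow_le_pow_of_le_one (by norm_num) (by norm_num) hdd4
        have h7 : ((229:ℝ)/250) ^ 4 * 162 < 144 := by norm_num
        have h8 : (144:ℝ) ≤ 72 * (d:ℝ) := by
          have : (2:ℝ) ≤ (d:ℝ) := by exact_mod_cast hd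
          linarith
        have keyr : ((229:ℝ)/250) ^ (d * d) * 162 < 72 * (d:ℝ) := by nlinarith
        have hsplit : ((229:ℝ)/25) ^ (d * d) = ((229:ℝ)/250) ^ (d * d) * 10 ^ (d * d) := by
          rw [← mul_pow]; norm_num
        have h10' : (0:ℝ) < 10 ^ (d * d) := by positivity
        rw [hDdef, hsplit]
        have hd2 : d ^ 2 = d * d := sq d
        rw [hd2]
        calc ((229:ℝ)/250) ^ (d*d) * 10 ^ (d*d) * 162
            = (((229:ℝ)/250) ^ (d*d) * 162) * 10 ^ (d*d) := by ring
          _ < (72 * (d:ℝ)) * 10 ^ (d*d) := mul_lt_mul_of_pos_right keyr h10'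
          _ = 72 * 10 ^ (d*d) * (d:ℝ) := by ring
      nlinarith
    · have hz : ∑ j ∈ Finset.Icc 2 d, Sfin.card.choose j = 0 := by
        refine Finset.sum_eq_zero fun j hj => ?_
        have hj2 : 2 ≤ j := (Finset.mem_Icc.mp hj).1
        exact Nat.choose_eq_zero_of_lt (by omega)
      have h0 : 𝒯.card = 0 := by omega
      rw [h0]
      simpa using hD
  refine ⟨⋃ σ ∈ 𝒯, Set.Ioo (SliverA M P p w σ - ε) (SliverA M P p w σ + ε),
    isOpen_iUnion fun σ => isOpen_iUnion fun _ => isOpen_Ioo, ?_, ?_⟩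
  · -- the complement of `I` in `[0,(M/3)²]` is nonempty (volume pigeonhole)
    by_contra hcon
    rw [Set.not_nonempty_iff_eq_empty, Set.diff_eq_empty] at hcon
    have hvol1 := measure_mono (μ := (volume : Measure ℝ)) hcon
    have hIcc : volume (Set.Icc (0:ℝ) ((M/3)^2)) = ENNReal.ofReal ((M/3)^2) := by
      rw [Real.volume_Icc, sub_zero]
    have hIle : volume (⋃ σ ∈ 𝒯, Set.Ioo (SliverA M P p w σ - ε) (SliverA M P p w σ + ε))
        ≤ ∑ σ ∈ 𝒯, volume (Set.Ioo (SliverA M P p w σ - ε) (SliverA M P p w σ + ε)) :=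
      measure_biUnion_finset_le (μ := (volume : Measure ℝ)) 𝒯 _
    have heach : ∀ σ : Finset (EuclideanSpace ℝ (Fin d)),
        volume (Set.Ioo (SliverA M P p w σ - ε) (SliverA M P p w σ + ε))
          = ENNReal.ofReal (2*ε) := by
      intro σ
      rw [Real.volume_Ioo]
      congr 1
      ring
    rw [Finset.sum_congr rfl (fun σ _ => heach σ), Finset.sum_const, nsmul_eq_mul] at hIle
    have hreal : (𝒯.card : ℝ) * (2*ε) < (M/3)^2 := by
      have hM2 : (0:ℝ) < M^2/9 := by positivity
      have hmul := mul_lt_mul_of_pos_right hcard hDinvpos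
      have hDD : D * D⁻¹ = 1 := mul_inv_cancel₀ hD.ne'
      have h9 : ((M:ℝ)/3)^2 = M^2/9 := by ring
      rw [hεdef, h9]
      calc (𝒯.card : ℝ) * (2*(9 * D⁻¹ * M^2)) = ((𝒯.card:ℝ) * 162 * D⁻¹) * (M^2 / 9) := by
            ring
        _ < (D * D⁻¹) * (M^2/9) := by nlinarith
        _ = M^2/9 := by rw [hDD, one_mul]
    have hlt : (𝒯.card : ℝ≥0∞) * ENNReal.ofReal (2*ε) < ENNReal.ofReal ((M/3)^2) := by
      rw [← ENNReal.ofReal_natCast, ← ENNReal.ofReal_mul (Nat.cast_nonneg _)]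
      exact (ENNReal.ofReal_lt_ofReal_iff (by positivity)).mpr hreal
    have := lt_of_le_of_lt (le_trans hvol1 hIle) hlt
    rw [hIcc] at this
    exact lt_irrefl _ this
  · -- the main property
    intro k hk1 hkd τ hτD hinsD hdistτ w' hw'W hagree hnotI hex
    obtain ⟨τ', hτ'del, hsub⟩ := hex
    obtain ⟨⟨hτcard, hτP, -⟩, -⟩ := hτD
    obtain ⟨⟨hinscard, -, -⟩, -⟩ := hinsD
    have hpτ : p ∉ τ := by
      intro hpin
      rw [Finset.insert_eq_self.mpr hpin] at hinscard
      omega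
    obtain ⟨hτ'Δ, z, u, ⟨hzspan, hzdist⟩, hempty⟩ := hτ'del
    have h₁ : ∀ x ∈ insert p τ, ‖z - x‖^2 = u + w' x := fun x hx => hzdist x (hsub hx)
    obtain ⟨q₀, hq₀⟩ := Finset.card_pos.mp (show 0 < τ.card by omega)
    have hτS : τ ⊆ Sfin := by
      intro q hq
      have hqP : q ∈ P := hτP hq
      have hqi : q ∈ insert p τ := Finset.mem_insert_of_mem hq
      have hrq : ‖z - q‖ ≤ 51/25*M :=
        sliver_radius_bound hM hsyn hw'W hempty hqP (h₁ q hqi)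
      have hrp : ‖z - p‖ ≤ 51/25*M :=
        sliver_radius_bound hM hsyn hw'W hempty hp (h₁ p (Finset.mem_insert_self _ _))
      have hdq : dist q p ≤ R := by
        rw [hRdef]
        have e1 : dist z q = ‖z - q‖ := dist_eq_norm _ _
        have e2 : dist z p = ‖z - p‖ := dist_eq_norm _ _
        calc dist q p ≤ dist q z + dist z p := dist_triangle _ _ _
          _ = ‖z - q‖ + ‖z - p‖ := by rw [dist_comm q z, e1, e2]
          _ ≤ 204/50 * M := by linarith
      rw [hSdef]
      refine Finset.mem_erase.mpr ⟨?_, ?_⟩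
      · rintro rfl; exact hpτ hq
      · rw [Set.Finite.mem_toFinset]; exact ⟨hqP, mem_closedBall.mpr hdq⟩
    have hτ𝒯 : τ ∈ 𝒯 := by
      rw [hTdef]
      refine Finset.mem_biUnion.mpr ⟨k+1, ?_, ?_⟩
      · rw [Finset.mem_Icc]; omega
      · exact Finset.mem_powersetCard.mpr ⟨hτS, hτcard⟩
    have hach : SliverAch M P p w τ (w' p) :=
      ⟨w', hw'W, hagree, rfl, τ', ⟨hτ'Δ, z, u, ⟨hzspan, hzdist⟩, hempty⟩, hsub⟩
    have hex2 : ∃ a, SliverAch M P p w τ a := ⟨_, hach⟩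
    obtain ⟨w₂, hw₂W, hagr₂, hw₂p, τ₂, hτ₂del, hsub₂⟩ := SliverA_spec hex2
    obtain ⟨hτ₂Δ, z₂, u₂, ⟨-, hzdist₂⟩, hempty₂⟩ := hτ₂del
    have h₂ : ∀ x ∈ insert p τ, ‖z₂ - x‖^2 = u₂ + w₂ x := fun x hx => hzdist₂ x (hsub₂ hx)
    have hagw : ∀ q ∈ τ, w' q = w₂ q := fun q hq => (hagree q hq).trans (hagr₂ q hq).symm
    have hkey := sliver_key_diff hM hsyn hτP hq₀ hdistτ hw'W hw₂W hagw h₁ h₂ hempty hempty₂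
    rw [hw₂p] at hkey
    have hsmall : 204/25*M*(D⁻¹*M) < ε := by
      rw [hεdef]
      nlinarith [mul_pos hDinvpos (mul_pos hM hM)]
    have habs := abs_lt.mp (lt_of_le_of_lt hkey hsmall)
    refine hnotI (Set.mem_iUnion₂.mpr ⟨τ, hτ𝒯, ?_⟩)
    constructor
    · linarith [habs.1]
    · linarith [habs.2]
end
end

section
/- Let X ⊆ Ω be a flat Cantor transversal for a free minimal continuous action φ of ℝ^d on a compact metrizable space Ω. Then for any M > 0 there exist finitely many clopen subsets V₁,…,V_n of X which are pairwise disjoint, cover X, and satisfy V_i ∩ φ^p(V_i) = ∅ for every i = 1,…,n and every non-zero p ∈ B(0,M). -/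
noncomputable section

open Metric

variable {d : ℕ} {Ω : Type*} [TopologicalSpace Ω]

/-- `φ` is a continuous action of `ℝ^d` on `Ω` by homeomorphisms. -/
def IsCtsAction (φ : EuclideanSpace ℝ (Fin d) → Ω → Ω) : Prop :=
  Continuous (fun q : EuclideanSpace ℝ (Fin d) × Ω => φ q.1 q.2) ∧
    (∀ x, φ 0 x = x) ∧ ∀ p q x, φ (p + q) x = φ p (φ q x)

/-- The action `φ` is free. -/
def IsFreeAction (φ : EuclideanSpace ℝ (Fin d) → Ω → Ω) : Prop :=
  ∀ p x, φ p x = x → p = 0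

/-- The action `φ` is minimal: every orbit is dense. -/
def IsMinimalAction (φ : EuclideanSpace ℝ (Fin d) → Ω → Ω) : Prop :=
  ∀ x : Ω, Dense (Set.range fun p => φ p x)

/-- `U` is a clopen subset of `X` (in the subspace topology of `X`). -/
def ClopenIn (U X : Set Ω) : Prop :=
  U ⊆ X ∧ IsClopen (Subtype.val ⁻¹' U : Set X)

/-- `X ⊆ Ω` is a flat Cantor transversal for the free action `φ` of `ℝ^d` on `Ω`:
(1) `X` is a Cantor set (non-empty, closed — hence compact —, totally disconnected,
without isolated points); (2) every `φ`-orbit meets `X`; (3) there is `M > 0` such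
that `C = {φ^p(x) : x ∈ X, p ∈ B(0,M)}` is open and `(x,p) ↦ φ^p(x)` is a
homeomorphism from `X × B(0,M)` onto `C`; (4) the return times to `X` in a bounded
window are locally constant. -/
def FlatCantorTransversal (φ : EuclideanSpace ℝ (Fin d) → Ω → Ω) (X : Set Ω) : Prop :=
  Perfect X ∧ X.Nonempty ∧ IsTotallyDisconnected X ∧
  (∀ x : Ω, ∃ p, φ p x ∈ X) ∧
  (∃ M : ℝ, 0 < M ∧
    IsOpen {ω : Ω | ∃ x ∈ X, ∃ p ∈ ball (0 : EuclideanSpace ℝ (Fin d)) M, φ p x = ω} ∧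
    ∃ e : (X × ball (0 : EuclideanSpace ℝ (Fin d)) M) ≃ₜ
        {ω : Ω | ∃ x ∈ X, ∃ p ∈ ball (0 : EuclideanSpace ℝ (Fin d)) M, φ p x = ω},
      ∀ xp : X × ball (0 : EuclideanSpace ℝ (Fin d)) M,
        (e xp : Ω) = φ (xp.2 : EuclideanSpace ℝ (Fin d)) (xp.1 : Ω)) ∧
  (∀ x ∈ X, ∀ r : ℝ, 0 < r → ∃ U ⊆ X, x ∈ U ∧ (∃ O, IsOpen O ∧ U = O ∩ X) ∧
    ∀ y ∈ U, {p ∈ ball (0 : EuclideanSpace ℝ (Fin d)) r | φ p x ∈ X}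
      = {p ∈ ball (0 : EuclideanSpace ℝ (Fin d)) r | φ p y ∈ X})

/-- `P_U(x) = {p ∈ ℝ^d : φ^p(x) ∈ U}`. -/
def Porbit (φ : EuclideanSpace ℝ (Fin d) → Ω → Ω) (U : Set Ω) (x : Ω) :
    Set (EuclideanSpace ℝ (Fin d)) :=
  {p | φ p x ∈ U}

/-- For a flat Cantor transversal `X` of a free minimal continuous action of `ℝ^d`
on a compact metrizable space and any `M > 0`, there is a finite clopen partition
`V₁,…,V_n` of `X` with `V_i ∩ φ^p(V_i) = ∅` for every `i` and every non-zero
`p ∈ B(0,M)`. -/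
theorem stmt8 [CompactSpace Ω] [TopologicalSpace.MetrizableSpace Ω] (hd : 1 ≤ d)
    (φ : EuclideanSpace ℝ (Fin d) → Ω → Ω) (X : Set Ω)
    (hact : IsCtsAction φ) (hfree : IsFreeAction φ) (hmin : IsMinimalAction φ)
    (hX : FlatCantorTransversal φ X) (M : ℝ) (hM : 0 < M) :
    ∃ (n : ℕ) (V : Fin n → Set Ω),
      (∀ i, ClopenIn (V i) X) ∧
      (∀ i j, i ≠ j → Disjoint (V i) (V j)) ∧
      (⋃ i, V i) = X ∧
      ∀ i, ∀ p ∈ ball (0 : EuclideanSpace ℝ (Fin d)) M, p ≠ 0 →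
        Disjoint (V i) (φ p '' V i) := by
    classical
  letI := TopologicalSpace.metrizableSpaceMetric Ω
  obtain ⟨hcont, hzero, hadd⟩ := hact
  have hcp : ∀ p, Continuous (φ p) := fun p => hcont.comp (Continuous.prodMk_right p)
  obtain ⟨hPerf, hne, htd, -, ⟨M₀, hM₀, -, e, he⟩, hret⟩ := hX
  have hXcl : IsClosed X := hPerf.1
  have hXcpt : IsCompact X := hXcl.isCompact
  -- returns are M₀-separated
  have hsep0 : ∀ x, ∀ hx : x ∈ X, ∀ p, φ p x ∈ X → dist p (0 : EuclideanSpace ℝ (Fin d)) < M₀ →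
      p = 0 := by
    intro x hx p hpx hp
    have h0 : (0 : EuclideanSpace ℝ (Fin d)) ∈ ball (0 : EuclideanSpace ℝ (Fin d)) M₀ :=
      mem_ball_self hM₀
    have hp' : p ∈ ball (0 : EuclideanSpace ℝ (Fin d)) M₀ := mem_ball.mpr hp
    have h1 : (e (⟨x, hx⟩, ⟨p, hp'⟩) : Ω) = φ p x := he _
    have h2 : (e (⟨φ p x, hpx⟩, ⟨0, h0⟩) : Ω) = φ p x := by
      rw [he]; exact hzero _
    have heq := e.injective (Subtype.ext (h1.trans h2.symm))
    have := congrArg (fun a : (X × ball (0 : EuclideanSpace ℝ (Fin d)) M₀) =>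
      (a.2 : EuclideanSpace ℝ (Fin d))) heq
    simpa using this
  have hsep : ∀ x ∈ X, ∀ p q, φ p x ∈ X → φ q x ∈ X → dist p q < M₀ → p = q := by
    intro x hx p q hp hq hpq
    have h1 : φ (p - q) (φ q x) = φ p x := by rw [← hadd, sub_add_cancel]
    have h2 : dist (p - q) (0 : EuclideanSpace ℝ (Fin d)) < M₀ := by
      rwa [dist_zero_right, ← dist_eq_norm]
    have := hsep0 (φ q x) hq (p - q) (by rw [h1]; exact hp) h2
    exact sub_eq_zero.mp this
  -- finiteness of returns in a ball
  have hfin : ∀ x ∈ X, Set.Finite {p : EuclideanSpace ℝ (Fin d) |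
      φ p x ∈ X ∧ p ∈ ball (0 : EuclideanSpace ℝ (Fin d)) M} := by
    intro x hx
    set T : Set (EuclideanSpace ℝ (Fin d)) :=
      {p | φ p x ∈ X} ∩ closedBall (0 : EuclideanSpace ℝ (Fin d)) M with hT
    have hTcl : IsClosed T :=
      (hXcl.preimage (hcont.comp (continuous_id.prodMk continuous_const))).inter
        isClosed_closedBall
    have hTcpt : IsCompact T := (isCompact_closedBall _ M).inter_left
      (hXcl.preimage (hcont.comp (continuous_id.prodMk continuous_const)))
    obtain ⟨b, hbT, hbfin, hbcov⟩ := hTcpt.elim_finite_subcover_image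
      (b := T) (c := fun p => ball p M₀) (fun p _ => isOpen_ball)
      (fun p hp => Set.mem_biUnion hp (mem_ball_self hM₀))
    have hTb : T ⊆ b := by
      intro t ht
      obtain ⟨p, hpb, hpt⟩ := Set.mem_iUnion₂.mp (hbcov ht)
      have := hsep x hx t p ht.1 (hbT hpb).1 (mem_ball.mp hpt)
      rwa [this]
    refine Set.Finite.subset (hbfin.subset hTb) ?_
    intro p hp
    exact ⟨hp.1, ball_subset_closedBall hp.2⟩
  haveI : CompactSpace ↥X := isCompact_iff_compactSpace.mp hXcpt
  haveI : TotallyDisconnectedSpace ↥X := totallyDisconnectedSpace_subtype_iff.mpr htd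
  -- per-point clopen set
  have key : ∀ x : ↥X, ∃ C : Set ↥X, IsClopen C ∧ x ∈ C ∧
      ∀ p ∈ ball (0 : EuclideanSpace ℝ (Fin d)) M, p ≠ 0 →
        Disjoint (Subtype.val '' C) (φ p '' (Subtype.val '' C)) := by
    intro x
    obtain ⟨U, hUX, hxU, ⟨O₁, hO₁, hUO⟩, hpat⟩ := hret x.1 x.2 M hM
    set F : Set (EuclideanSpace ℝ (Fin d)) :=
      {p | φ p x.1 ∈ X ∧ p ∈ ball (0 : EuclideanSpace ℝ (Fin d)) M} with hF
    have hFfin : F.Finite := hfin x.1 x.2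
    have hO : ∀ p : EuclideanSpace ℝ (Fin d), ∃ Op : Set Ω, IsOpen Op ∧ x.1 ∈ Op ∧
        (p ∈ F → p ≠ 0 → ∀ y ∈ Op, φ p y ∉ Op) := by
      intro p
      by_cases hc : p ∈ F ∧ p ≠ 0
      · have hnex : φ p x.1 ≠ x.1 := fun h => hc.2 (hfree p x.1 h)
        obtain ⟨A, B, hA, hB, hxA, hxB, hAB⟩ := t2_separation hnex
        refine ⟨B ∩ φ p ⁻¹' A, hB.inter (hA.preimage (hcp p)), ⟨hxB, hxA⟩, ?_⟩
        intro _ _ y hy hmem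
        exact Set.disjoint_left.mp hAB hy.2 hmem.1
      · exact ⟨Set.univ, isOpen_univ, Set.mem_univ _, fun h1 h2 => absurd ⟨h1, h2⟩ hc⟩
    choose Op hOpo hOpx hOpkey using hO
    set O : Set Ω := O₁ ∩ ⋂ p ∈ F, Op p with hOdef
    have hOopen : IsOpen O := hO₁.inter (hFfin.isOpen_biInter fun p _ => hOpo p)
    have hxO₁ : x.1 ∈ O₁ := (hUO ▸ hxU).1
    have hxO : x.1 ∈ O := ⟨hxO₁, Set.mem_iInter₂.mpr fun p _ => hOpx p⟩
    obtain ⟨C, hCclo, hxC, hCsub⟩ := compact_exists_isClopen_in_isOpen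
      (hOopen.preimage continuous_subtype_val) (show x ∈ Subtype.val ⁻¹' O from hxO)
    refine ⟨C, hCclo, hxC, ?_⟩
    intro p hpball hp0
    rw [Set.disjoint_left]
    rintro ω hω ⟨y, hyW, rfl⟩
    obtain ⟨cy, hcyC, rfl⟩ := hyW
    have hyO : (cy : Ω) ∈ O := hCsub hcyC
    obtain ⟨cω, hcωC, hcωeq⟩ := hω
    have hωX : φ p (cy : Ω) ∈ X := hcωeq ▸ cω.2
    have hωO : φ p (cy : Ω) ∈ O := hcωeq ▸ hCsub hcωC
    have hyU : (cy : Ω) ∈ U := by rw [hUO]; exact ⟨hyO.1, cy.2⟩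
    have hpF : p ∈ F := by
      have := (hpat (cy : Ω) hyU).symm
      have hmem : p ∈ {q ∈ ball (0 : EuclideanSpace ℝ (Fin d)) M | φ q (cy : Ω) ∈ X} :=
        ⟨hpball, hωX⟩
      have hx' : p ∈ {q ∈ ball (0 : EuclideanSpace ℝ (Fin d)) M | φ q x.1 ∈ X} :=
        this ▸ hmem
      exact ⟨hx'.2, hx'.1⟩
    have hyOp : (cy : Ω) ∈ Op p := Set.mem_iInter₂.mp hyO.2 p hpF
    have hωOp : φ p (cy : Ω) ∈ Op p := Set.mem_iInter₂.mp hωO.2 p hpF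
    exact hOpkey p hpF hp0 _ hyOp hωOp
  choose C hCclo hCmem hCkey using key
  obtain ⟨t, -, hcov⟩ := isCompact_univ.elim_nhds_subcover C
    (fun x _ => (hCclo x).2.mem_nhds (hCmem x))
  set n : ℕ := t.card with hn
  set g : Fin n → ↥X := fun i => ((t.equivFin.symm i : t) : ↥X) with hg
  set D : Fin n → Set ↥X := fun i =>
    C (g i) ∩ ⋂ j : Fin n, ⋂ _ : j < i, (C (g j))ᶜ with hD
  have hDclo : ∀ i, IsClopen (D i) := by
    intro i
    refine (hCclo (g i)).inter (isClopen_iInter_of_finite fun j => ?_)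
    exact isClopen_iInter_of_finite fun _ => (hCclo (g j)).compl
  have hDsub : ∀ i, D i ⊆ C (g i) := fun i => Set.inter_subset_left
  have hDdisj : ∀ i j, i ≠ j → Disjoint (D i) (D j) := by
    intro i j hij
    rcases lt_or_gt_of_ne hij with h | h
    · refine Set.disjoint_left.mpr fun y hyi hyj => ?_
      exact (Set.mem_iInter₂.mp hyj.2 i h) hyi.1
    · refine Set.disjoint_left.mpr fun y hyi hyj => ?_
      exact (Set.mem_iInter₂.mp hyi.2 j h) hyj.1
  have hDcov : (⋃ i, D i) = Set.univ := by
    apply Set.eq_univ_of_forall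
    intro y
    have hy : y ∈ ⋃ x ∈ t, C x := hcov (Set.mem_univ y)
    obtain ⟨z, hzt, hyz⟩ := Set.mem_iUnion₂.mp hy
    set s : Finset (Fin n) := Finset.univ.filter (fun i => y ∈ C (g i)) with hs
    have hsne : s.Nonempty := by
      refine ⟨t.equivFin ⟨z, hzt⟩, ?_⟩
      rw [hs, Finset.mem_filter]
      refine ⟨Finset.mem_univ _, ?_⟩
      have : g (t.equivFin ⟨z, hzt⟩) = z := by
        rw [hg]; simp
      rw [this]; exact hyz
    set i₀ : Fin n := s.min' hsne with hi₀
    have hi₀s : i₀ ∈ s := s.min'_mem hsne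
    have hyC : y ∈ C (g i₀) := (Finset.mem_filter.mp hi₀s).2
    refine Set.mem_iUnion.mpr ⟨i₀, hyC, Set.mem_iInter₂.mpr fun j hj hyj => ?_⟩
    have hjs : j ∈ s := Finset.mem_filter.mpr ⟨Finset.mem_univ _, hyj⟩
    exact absurd (s.min'_le j hjs) (not_le.mpr hj)
  refine ⟨n, fun i => Subtype.val '' D i, ?_, ?_, ?_, ?_⟩
  · intro i
    refine ⟨?_, ?_⟩
    · rintro ω ⟨c, -, rfl⟩; exact c.2
    · rw [Set.preimage_image_eq _ Subtype.coe_injective]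
      exact hDclo i
  · intro i j hij
    exact Set.disjoint_image_of_injective Subtype.coe_injective (hDdisj i j hij)
  · rw [← Set.image_iUnion, hDcov, Set.image_univ, Subtype.range_coe]
  · intro i p hp hp0
    refine Disjoint.mono (Set.image_mono (hDsub i))
      (Set.image_mono (Set.image_mono (hDsub i))) ?_
    exact hCkey (g i) p hp hp0
end
end

section
/- Let X ⊆ Ω be a flat Cantor transversal for a free minimal continuous action φ of ℝ^d on a compact metrizable space Ω, and suppose that there is M₁ > 0 such that P_X(x) is M₁-syndetic for every x ∈ X. Then for every M > M₁ there exists a clopen subset U ⊆ X such that P_U(x) is M-separated and 2M-syndetic for every x ∈ X. -/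
noncomputable section
set_option linter.unusedSectionVars false

open Metric

variable {d : ℕ} {Ω : Type*} [TopologicalSpace Ω]

/-- A bounded uniformly separated set in a proper metric space is finite. -/
lemma finite_of_sep_of_bounded {E : Type*} [MetricSpace E] [ProperSpace E]
    {S : Set E} {ε : ℝ} (hε : 0 < ε)
    (hsep : ∀ p ∈ S, ∀ q ∈ S, p ≠ q → ε ≤ dist p q)
    (hb : Bornology.IsBounded S) : S.Finite := by
  have hc : IsCompact (closure S) := hb.isCompact_closure
  obtain ⟨t, ht⟩ := hc.elim_finite_subcover (fun c : E => ball c (ε / 2))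
    (fun c => isOpen_ball) (fun x _ => Set.mem_iUnion.2 ⟨x, mem_ball_self (by linarith)⟩)
  have hsub : S ⊆ ⋃ c ∈ t, S ∩ ball c (ε / 2) := by
    intro p hp
    obtain ⟨c, hc1, hc2⟩ := Set.mem_iUnion₂.1 (ht (subset_closure hp))
    exact Set.mem_iUnion₂.2 ⟨c, hc1, hp, hc2⟩
  refine Set.Finite.subset (Set.Finite.biUnion t.finite_toSet fun c _ => ?_) hsub
  refine Set.Subsingleton.finite ?_
  intro p hp q hq
  by_contra hne
  have h1 := hsep p hp.1 q hq.1 hne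
  have h2 : dist p c < ε / 2 := hp.2
  have h3 : dist c q < ε / 2 := by rw [dist_comm]; exact hq.2
  have := dist_triangle p c q
  linarith

/-- Relatively clopen subsets of `X`, described by ambient open and closed sets. -/
def RelCl (X U : Set Ω) : Prop :=
  U ⊆ X ∧ (∃ O, IsOpen O ∧ U = O ∩ X) ∧ (∃ C, IsClosed C ∧ U = C ∩ X)

namespace RelCl

variable {X U V : Set Ω}

lemma empty : RelCl X (∅ : Set Ω) :=
  ⟨Set.empty_subset _, ⟨∅, isOpen_empty, by simp⟩, ⟨∅, isClosed_empty, by simp⟩⟩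

lemma union (hU : RelCl X U) (hV : RelCl X V) : RelCl X (U ∪ V) := by
  obtain ⟨hU1, ⟨O₁, hO₁, hUO⟩, ⟨C₁, hC₁, hUC⟩⟩ := hU
  obtain ⟨hV1, ⟨O₂, hO₂, hVO⟩, ⟨C₂, hC₂, hVC⟩⟩ := hV
  refine ⟨Set.union_subset hU1 hV1, ⟨O₁ ∪ O₂, hO₁.union hO₂, ?_⟩,
    ⟨C₁ ∪ C₂, hC₁.union hC₂, ?_⟩⟩
  · rw [hUO, hVO]; rw [Set.union_inter_distrib_right]
  · rw [hUC, hVC]; rw [Set.union_inter_distrib_right]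

lemma diff (hU : RelCl X U) (hV : RelCl X V) : RelCl X (U \ V) := by
  obtain ⟨hU1, ⟨O₁, hO₁, hUO⟩, ⟨C₁, hC₁, hUC⟩⟩ := hU
  obtain ⟨hV1, ⟨O₂, hO₂, hVO⟩, ⟨C₂, hC₂, hVC⟩⟩ := hV
  refine ⟨(Set.diff_subset).trans hU1, ⟨O₁ ∩ C₂ᶜ, hO₁.inter hC₂.isOpen_compl, ?_⟩,
    ⟨C₁ ∩ O₂ᶜ, hC₁.inter hO₂.isClosed_compl, ?_⟩⟩
  · ext y
    constructor
    · rintro ⟨hyU, hyV⟩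
      have hyX : y ∈ X := hU1 hyU
      refine ⟨⟨(hUO ▸ hyU).1, fun hyC => hyV ?_⟩, hyX⟩
      rw [hVC]; exact ⟨hyC, hyX⟩
    · rintro ⟨⟨hyO, hyC⟩, hyX⟩
      refine ⟨hUO ▸ ⟨hyO, hyX⟩, fun hyV => hyC ?_⟩
      rw [hVC] at hyV; exact hyV.1
  · ext y
    constructor
    · rintro ⟨hyU, hyV⟩
      have hyX : y ∈ X := hU1 hyU
      refine ⟨⟨(hUC ▸ hyU).1, fun hyO => hyV ?_⟩, hyX⟩
      rw [hVO]; exact ⟨hyO, hyX⟩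
    · rintro ⟨⟨hyC, hyO⟩, hyX⟩
      refine ⟨hUC ▸ ⟨hyC, hyX⟩, fun hyV => hyO ?_⟩
      rw [hVO] at hyV; exact hyV.1

lemma inter_preimage {W T : Set Ω} (hW : RelCl X W) (hT : RelCl X T)
    {g : Ω → Ω} (hg : Continuous g) (hmem : ∀ y ∈ W, g y ∈ X) :
    RelCl X (W ∩ g ⁻¹' T) := by
  obtain ⟨hW1, ⟨O₁, hO₁, hWO⟩, ⟨C₁, hC₁, hWC⟩⟩ := hW
  obtain ⟨hT1, ⟨O₂, hO₂, hTO⟩, ⟨C₂, hC₂, hTC⟩⟩ := hT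
  refine ⟨Set.inter_subset_left.trans hW1, ⟨O₁ ∩ g ⁻¹' O₂, hO₁.inter (hO₂.preimage hg), ?_⟩,
    ⟨C₁ ∩ g ⁻¹' C₂, hC₁.inter (hC₂.preimage hg), ?_⟩⟩
  · ext y
    constructor
    · rintro ⟨hyW, hyT⟩
      exact ⟨⟨(hWO ▸ hyW).1, (hTO ▸ (hyT : g y ∈ T)).1⟩, hW1 hyW⟩
    · rintro ⟨⟨hyO, hyO'⟩, hyX⟩
      have hyW : y ∈ W := hWO ▸ ⟨hyO, hyX⟩
      exact ⟨hyW, hTO ▸ ⟨hyO', hmem y hyW⟩⟩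
  · ext y
    constructor
    · rintro ⟨hyW, hyT⟩
      exact ⟨⟨(hWC ▸ hyW).1, (hTC ▸ (hyT : g y ∈ T)).1⟩, hW1 hyW⟩
    · rintro ⟨⟨hyC, hyC'⟩, hyX⟩
      have hyW : y ∈ W := hWC ▸ ⟨hyC, hyX⟩
      exact ⟨hyW, hTC ▸ ⟨hyC', hmem y hyW⟩⟩

lemma biUnionFinset {ι : Type*} (t : Finset ι) {f : ι → Set Ω}
    (h : ∀ i ∈ t, RelCl X (f i)) : RelCl X (⋃ i ∈ t, f i) := by
  classical
  induction t using Finset.induction_on with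
  | empty => simpa using RelCl.empty
  | @insert a s ha ih =>
      rw [Finset.set_biUnion_insert]
      exact (h a (Finset.mem_insert_self a s)).union
        (ih fun i hi => h i (Finset.mem_insert_of_mem hi))

lemma clopenIn (h : RelCl X U) : ClopenIn U X := by
  obtain ⟨hUX, ⟨O, hO, hUO⟩, ⟨C, hC, hUC⟩⟩ := h
  refine ⟨hUX, ?_, ?_⟩
  · have : (Subtype.val ⁻¹' U : Set X) = Subtype.val ⁻¹' C := by
      ext ⟨y, hy⟩
      simp only [Set.mem_preimage]
      rw [hUC]
      exact ⟨fun h' => h'.1, fun h' => ⟨h', hy⟩⟩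
    rw [this]
    exact hC.preimage continuous_subtype_val
  · have : (Subtype.val ⁻¹' U : Set X) = Subtype.val ⁻¹' O := by
      ext ⟨y, hy⟩
      simp only [Set.mem_preimage]
      rw [hUO]
      exact ⟨fun h' => h'.1, fun h' => ⟨h', hy⟩⟩
    rw [this]
    exact hO.preimage continuous_subtype_val

end RelCl

/-- Cumulative unions of a sequence of sets. -/
def cumW (V : ℕ → Set Ω) : ℕ → Set Ω
  | 0 => ∅
  | i + 1 => cumW V i ∪ V i

lemma mem_cumW {V : ℕ → Set Ω} {y : Ω} : ∀ {k : ℕ}, y ∈ cumW V k ↔ ∃ i < k, y ∈ V i := by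
  intro k
  induction k with
  | zero => simp [cumW]
  | succ k ih =>
      simp only [cumW, Set.mem_union, ih]
      constructor
      · rintro (⟨i, hi, hy⟩ | hy)
        · exact ⟨i, Nat.lt_succ_of_lt hi, hy⟩
        · exact ⟨k, Nat.lt_succ_self k, hy⟩
      · rintro ⟨i, hi, hy⟩
        rcases Nat.lt_succ_iff_lt_or_eq.1 hi with h | rfl
        · exact Or.inl ⟨i, h, hy⟩
        · exact Or.inr hy

lemma cumW_relCl {X : Set Ω} {V : ℕ → Set Ω} (h : ∀ i, RelCl X (V i)) (k : ℕ) :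
    RelCl X (cumW V k) := by
  induction k with
  | zero => exact RelCl.empty
  | succ k ih => exact ih.union (h k)

/-- Greedy cumulative selection. -/
def greedy (φ : EuclideanSpace ℝ (Fin d) → Ω → Ω) (M : ℝ) (W : ℕ → Set Ω) : ℕ → Set Ω
  | 0 => ∅
  | i + 1 => greedy φ M W i ∪
      (W i \ {y | ∃ p, ‖p‖ < M ∧ φ p y ∈ greedy φ M W i})

lemma greedy_mono {φ : EuclideanSpace ℝ (Fin d) → Ω → Ω} {M : ℝ} {W : ℕ → Set Ω}
    {i j : ℕ} (h : i ≤ j) : greedy φ M W i ⊆ greedy φ M W j := by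
  induction j with
  | zero => simp [Nat.le_zero.1 h]
  | succ j ih =>
      rcases eq_or_lt_of_le h with rfl | h'
      · exact Set.Subset.rfl
      · exact (ih (Nat.lt_succ_iff.1 h')).trans Set.subset_union_left

lemma greedy_subset {φ : EuclideanSpace ℝ (Fin d) → Ω → Ω} {M : ℝ} {W : ℕ → Set Ω}
    {X : Set Ω} (hW : ∀ i, W i ⊆ X) (k : ℕ) : greedy φ M W k ⊆ X := by
  induction k with
  | zero => simp [greedy]
  | succ k ih =>
      exact Set.union_subset ih ((Set.diff_subset).trans (hW k))

lemma greedy_decomp {φ : EuclideanSpace ℝ (Fin d) → Ω → Ω} {M : ℝ} {W : ℕ → Set Ω}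
    {y : Ω} {k : ℕ} (h : y ∈ greedy φ M W k) :
    ∃ i < k, y ∉ greedy φ M W i ∧
      y ∈ W i ∧ ¬(∃ p, ‖p‖ < M ∧ φ p y ∈ greedy φ M W i) := by
  induction k with
  | zero => simp [greedy] at h
  | succ k ih =>
      rcases h with h | h
      · obtain ⟨i, hi, h⟩ := ih h
        exact ⟨i, Nat.lt_succ_of_lt hi, h⟩
      · by_cases hy : y ∈ greedy φ M W k
        · obtain ⟨i, hi, h'⟩ := ih hy
          exact ⟨i, Nat.lt_succ_of_lt hi, h'⟩
        · exact ⟨k, Nat.lt_succ_self k, hy, h.1, h.2⟩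

lemma greedy_mem_succ {φ : EuclideanSpace ℝ (Fin d) → Ω → Ω} {M : ℝ} {W : ℕ → Set Ω}
    {y : Ω} {i : ℕ} (h1 : y ∈ W i) (h2 : ¬(∃ p, ‖p‖ < M ∧ φ p y ∈ greedy φ M W i)) :
    y ∈ greedy φ M W (i + 1) :=
  Or.inr ⟨h1, h2⟩

/-- Suppose `P_X(x)` is `M₁`-syndetic for every `x ∈ X`. Then for every `M > M₁`
there is a clopen subset `U ⊆ X` such that `P_U(x)` is `M`-separated and
`2M`-syndetic for every `x ∈ X`. -/
theorem stmt9 [CompactSpace Ω] [TopologicalSpace.MetrizableSpace Ω] (hd : 1 ≤ d)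
    (φ : EuclideanSpace ℝ (Fin d) → Ω → Ω) (X : Set Ω)
    (hact : IsCtsAction φ) (hfree : IsFreeAction φ) (hmin : IsMinimalAction φ)
    (hX : FlatCantorTransversal φ X)
    (M₁ : ℝ) (hM₁ : 0 < M₁) (hsyn : ∀ x ∈ X, IsSyndeticSet M₁ (Porbit φ X x))
    (M : ℝ) (hM : M₁ < M) :
    ∃ U : Set Ω, ClopenIn U X ∧
      ∀ x ∈ X, IsSeparatedSet M (Porbit φ U x) ∧ IsSyndeticSet (2 * M) (Porbit φ U x) := by
  classical
  obtain ⟨hPerf, hNe, hTD, horb, ⟨M₀, hM₀, hopenC, e, he⟩, hpat⟩ := hX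
  obtain ⟨hcont, hzero, hadd⟩ := hact
  have hXcl : IsClosed X := hPerf.closed
  have hXcomp : IsCompact X := hXcl.isCompact
  have hMpos : 0 < M := hM₁.trans hM
  have hφp : ∀ p : EuclideanSpace ℝ (Fin d), Continuous (φ p) :=
    fun p => hcont.comp (continuous_const.prodMk continuous_id)
  -- inverse action fact
  have hinv : ∀ (p : EuclideanSpace ℝ (Fin d)) (y : Ω), φ (-p) (φ p y) = y := by
    intro p y
    rw [← hadd, neg_add_cancel, hzero]
  -- returns within distance M₀ are trivial
  have hret : ∀ x ∈ X, ∀ p : EuclideanSpace ℝ (Fin d), φ p x ∈ X → ‖p‖ < M₀ → p = 0 := by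
    intro x hx p hpx hp
    have hpm : p ∈ ball (0 : EuclideanSpace ℝ (Fin d)) M₀ := by
      rwa [mem_ball, dist_zero_right]
    have h0m : (0 : EuclideanSpace ℝ (Fin d)) ∈ ball (0 : EuclideanSpace ℝ (Fin d)) M₀ :=
      mem_ball_self hM₀
    have hab : (e ⟨⟨x, hx⟩, ⟨p, hpm⟩⟩ : Ω) = (e ⟨⟨φ p x, hpx⟩, ⟨0, h0m⟩⟩ : Ω) := by
      rw [he, he]
      simp [hzero]
    have := e.injective (Subtype.ext hab)
    have h2 := congrArg Prod.snd this
    exact Subtype.ext_iff.1 h2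
  -- distinct returns are M₀-separated
  have hsep0 : ∀ x ∈ X, ∀ p q : EuclideanSpace ℝ (Fin d),
      φ p x ∈ X → φ q x ∈ X → ‖p - q‖ < M₀ → p = q := by
    intro x hx p q hp hq hpq
    have h1 : φ (p - q) (φ q x) = φ p x := by
      rw [← hadd, sub_add_cancel]
    have := hret (φ q x) hq (p - q) (h1 ▸ hp) hpq
    exact sub_eq_zero.1 this
  -- finiteness of local return patterns
  have hfin : ∀ x ∈ X, Set.Finite {p : EuclideanSpace ℝ (Fin d) | ‖p‖ < M ∧ φ p x ∈ X} := by
    intro x hx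
    apply finite_of_sep_of_bounded hM₀
    · rintro p ⟨hp1, hp2⟩ q ⟨hq1, hq2⟩ hne
      by_contra hlt
      push_neg at hlt
      rw [dist_eq_norm] at hlt
      exact hne (hsep0 x hx p q hp2 hq2 hlt)
    · exact (isBounded_ball (x := (0 : EuclideanSpace ℝ (Fin d))) (r := M)).subset
        (fun p hp => by rw [mem_ball, dist_zero_right]; exact hp.1)
  -- good neighbourhoods
  have hnbhd : ∀ x ∈ X, ∃ V : Set Ω, RelCl X V ∧ x ∈ V ∧
      (∀ y ∈ V, ∀ p : EuclideanSpace ℝ (Fin d), ‖p‖ < M → (φ p y ∈ X ↔ φ p x ∈ X)) ∧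
      (∀ y ∈ V, ∀ p : EuclideanSpace ℝ (Fin d), ‖p‖ < M → p ≠ 0 → φ p y ∉ V) := by
    intro x hx
    obtain ⟨U₀, hU₀X, hxU₀, ⟨O₀, hO₀, hU₀eq⟩, hU₀pat⟩ := hpat x hx M hMpos
    have hpat' : ∀ y ∈ U₀, ∀ p : EuclideanSpace ℝ (Fin d), ‖p‖ < M →
        (φ p y ∈ X ↔ φ p x ∈ X) := by
      intro y hy p hp
      have hpb : p ∈ ball (0 : EuclideanSpace ℝ (Fin d)) M := by
        rwa [mem_ball, dist_zero_right]
      have := hU₀pat y hy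
      constructor
      · intro h
        have : p ∈ {p ∈ ball (0 : EuclideanSpace ℝ (Fin d)) M | φ p x ∈ X} := by
          rw [this]; exact ⟨hpb, h⟩
        exact this.2
      · intro h
        have h2 : p ∈ {p ∈ ball (0 : EuclideanSpace ℝ (Fin d)) M | φ p y ∈ X} := by
          rw [← this]; exact ⟨hpb, h⟩
        exact h2.2
    set F : Set (EuclideanSpace ℝ (Fin d)) := {p | ‖p‖ < M ∧ φ p x ∈ X} with hFdef
    have hFfin : F.Finite := hfin x hx
    have hFne : ∀ p ∈ F, p ≠ 0 → φ p x ≠ x := by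
      intro p hp hp0 hcon
      exact hp0 (hfree p x hcon)
    -- separating opens for each nonzero return
    have hsepnb : ∀ p : EuclideanSpace ℝ (Fin d), p ∈ F → p ≠ 0 →
        ∃ A B : Set Ω, IsOpen A ∧ IsOpen B ∧ x ∈ A ∧ φ p x ∈ B ∧ Disjoint A B := by
      intro p hp hp0
      obtain ⟨A, B, hA, hB, hxA, hxB, hAB⟩ := t2_separation (Ne.symm (hFne p hp hp0))
      exact ⟨A, B, hA, hB, hxA, hxB, hAB⟩
    choose! A B hAopen hBopen hxA hxB hABdisj using hsepnb
    set F' : Set (EuclideanSpace ℝ (Fin d)) := F \ {0} with hF'def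
    have hF'fin : F'.Finite := hFfin.diff
    set N : EuclideanSpace ℝ (Fin d) → Set Ω :=
      fun p => A p ∩ φ p ⁻¹' (B p) with hNdef
    have hNopen : ∀ p ∈ F', IsOpen (N p) := by
      intro p hp
      exact (hAopen p hp.1 hp.2).inter ((hBopen p hp.1 hp.2).preimage (hφp p))
    have hxN : ∀ p ∈ F', x ∈ N p := by
      intro p hp
      exact ⟨hxA p hp.1 hp.2, hxB p hp.1 hp.2⟩
    set O : Set Ω := O₀ ∩ ⋂ p ∈ F', N p with hOdef
    have hOopen : IsOpen O := hO₀.inter (hF'fin.isOpen_biInter hNopen)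
    have hxO : x ∈ O := by
      refine ⟨?_, Set.mem_iInter₂.2 hxN⟩
      have := hxU₀
      rw [hU₀eq] at this
      exact this.1
    -- pass to a clopen neighbourhood inside O, using the Cantor structure of X
    haveI : CompactSpace X := isCompact_iff_compactSpace.mp hXcomp
    haveI : TotallyDisconnectedSpace X := totallyDisconnectedSpace_subtype_iff.2 hTD
    obtain ⟨V', hV'clopen, hxV', hV'sub⟩ :=
      compact_exists_isClopen_in_isOpen (x := (⟨x, hx⟩ : X))
        (U := Subtype.val ⁻¹' O) (hOopen.preimage continuous_subtype_val) hxO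
    obtain ⟨O', hO', hO'eq⟩ := isOpen_induced_iff.1 hV'clopen.2
    obtain ⟨C', hC', hC'eq⟩ := isClosed_induced_iff.1 hV'clopen.1
    refine ⟨Subtype.val '' V', ⟨?_, ⟨O', hO', ?_⟩, ⟨C', hC', ?_⟩⟩, ⟨⟨x, hx⟩, hxV', rfl⟩,
      ?_, ?_⟩
    · rintro y ⟨z, hz, rfl⟩; exact z.2
    · rw [← hO'eq, Subtype.image_preimage_coe, Set.inter_comm]
    · rw [← hC'eq, Subtype.image_preimage_coe, Set.inter_comm]
    · -- pattern constancy on V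
      rintro y ⟨z, hz, rfl⟩ p hp
      have hyO : (z : Ω) ∈ O := hV'sub hz
      have hyU₀ : (z : Ω) ∈ U₀ := by
        rw [hU₀eq]; exact ⟨hyO.1, z.2⟩
      exact hpat' z hyU₀ p hp
    · -- avoidance on V
      rintro y ⟨z, hz, rfl⟩ p hp hp0 hcon
      obtain ⟨w, hw, hweq⟩ := hcon
      have hyO : (z : Ω) ∈ O := hV'sub hz
      have hyU₀ : (z : Ω) ∈ U₀ := by
        rw [hU₀eq]; exact ⟨hyO.1, z.2⟩
      have hpX : φ p (z : Ω) ∈ X := by rw [← hweq]; exact w.2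
      have hpF : p ∈ F' := ⟨⟨hp, (hpat' z hyU₀ p hp).1 hpX⟩, hp0⟩
      have hzN : (z : Ω) ∈ N p := (Set.mem_iInter₂.1 hyO.2) p hpF
      have hwO : (w : Ω) ∈ O := hV'sub hw
      have hwN : (w : Ω) ∈ N p := (Set.mem_iInter₂.1 hwO.2) p hpF
      have hwB : φ p (z : Ω) ∈ B p := hzN.2
      have hwA : φ p (z : Ω) ∈ A p := by rw [← hweq]; exact hwN.1
      exact Set.disjoint_left.1 (hABdisj p hpF.1 hpF.2) hwA hwB
  -- choose neighbourhoods and a finite subcover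
  choose! Vfun hVrel hVmem hVpat hVavoid using hnbhd
  have hVopen : ∀ x ∈ X, ∃ O, IsOpen O ∧ Vfun x = O ∩ X := fun x hx => (hVrel x hx).2.1
  choose! Ofun hOopen hOeq using hVopen
  have hcover : X ⊆ ⋃ z : X, Ofun (z : Ω) := by
    intro y hy
    refine Set.mem_iUnion.2 ⟨⟨y, hy⟩, ?_⟩
    have := hVmem y hy
    rw [hOeq y hy] at this
    exact this.1
  obtain ⟨t, ht⟩ := hXcomp.elim_finite_subcover (fun z : X => Ofun (z : Ω))
    (fun z => hOopen (z : Ω) z.2) hcover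
  set L : List X := t.toList with hLdef
  set V' : ℕ → Set Ω := fun i => if h : i < L.length then Vfun ((L.get ⟨i, h⟩ : X) : Ω) else ∅
    with hV'def
  have hV'rel : ∀ i, RelCl X (V' i) := by
    intro i
    by_cases h : i < L.length
    · have he : V' i = Vfun ((L.get ⟨i, h⟩ : X) : Ω) := by simp only [hV'def, dif_pos h]
      rw [he]; exact hVrel _ (L.get ⟨i, h⟩).2
    · have he : V' i = ∅ := by simp only [hV'def, dif_neg h]
      rw [he]; exact RelCl.empty
  have hV'sub : ∀ i, V' i ⊆ X := fun i => (hV'rel i).1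
  -- each nonempty V' i has a base point
  have hV'base : ∀ i < L.length, ∃ x ∈ X, V' i = Vfun x ∧
      (∀ y ∈ V' i, ∀ p : EuclideanSpace ℝ (Fin d), ‖p‖ < M → (φ p y ∈ X ↔ φ p x ∈ X)) ∧
      (∀ y ∈ V' i, ∀ p : EuclideanSpace ℝ (Fin d), ‖p‖ < M → p ≠ 0 → φ p y ∉ V' i) := by
    intro i hi
    have he : V' i = Vfun ((L.get ⟨i, hi⟩ : X) : Ω) := by simp only [hV'def, dif_pos hi]
    refine ⟨((L.get ⟨i, hi⟩ : X) : Ω), (L.get ⟨i, hi⟩).2, he, ?_, ?_⟩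
    · intro y hy p hp
      rw [he] at hy
      exact hVpat _ (L.get ⟨i, hi⟩).2 y hy p hp
    · intro y hy p hp hp0
      rw [he] at hy ⊢
      exact hVavoid _ (L.get ⟨i, hi⟩).2 y hy p hp hp0
  have hcov' : ∀ y ∈ X, ∃ i < L.length, y ∈ V' i := by
    intro y hy
    obtain ⟨z, hz1, hz2⟩ := Set.mem_iUnion₂.1 (ht hy)
    obtain ⟨i, hiL⟩ := List.get_of_mem (Finset.mem_toList.2 hz1)
    refine ⟨(i : ℕ), i.2, ?_⟩
    have he : V' (i : ℕ) = Vfun ((L.get ⟨(i : ℕ), i.2⟩ : X) : Ω) := by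
      simp only [hV'def]
      rw [dif_pos (show (i : ℕ) < L.length from i.2)]
    rw [he]
    have : Vfun (z : Ω) = Ofun (z : Ω) ∩ X := hOeq (z : Ω) z.2
    rw [show (L.get ⟨(i : ℕ), i.2⟩ : X) = z from by simpa using hiL]
    rw [this]
    exact ⟨hz2, hy⟩
  -- disjointify
  set W : ℕ → Set Ω := fun i => V' i \ cumW V' i with hWdef
  have hWrel : ∀ i, RelCl X (W i) := fun i => (hV'rel i).diff (cumW_relCl hV'rel i)
  have hWsub : ∀ i, W i ⊆ X := fun i => (hWrel i).1
  have hWsubV : ∀ i, W i ⊆ V' i := fun i => Set.diff_subset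
  have hWcov : ∀ y ∈ X, ∃ i < L.length, y ∈ W i := by
    intro y hy
    obtain ⟨i, hi, hyV⟩ := hcov' y hy
    have hex : ∃ k, y ∈ V' k := ⟨i, hyV⟩
    have hyVj : y ∈ V' (Nat.find hex) := Nat.find_spec hex
    have hjle : Nat.find hex ≤ i := Nat.find_le hyV
    refine ⟨Nat.find hex, lt_of_le_of_lt hjle hi, hyVj, ?_⟩
    intro hcum
    obtain ⟨k, hk, hyk⟩ := mem_cumW.1 hcum
    exact Nat.find_min hex hk hyk
  -- greedy selection
  set G : ℕ → Set Ω := greedy φ M W with hGdef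
  have hGsub : ∀ k, G k ⊆ X := fun k => greedy_subset hWsub k
  have hGrel : ∀ k, RelCl X (G k) := by
    intro k
    induction k with
    | zero => exact RelCl.empty
    | succ k ih =>
        have hstep : G (k + 1) = G k ∪ (W k \ {y | ∃ p, ‖p‖ < M ∧ φ p y ∈ G k}) := rfl
        rw [hstep]
        by_cases hk : k < L.length
        · obtain ⟨xk, hxk, hVeq, hpatk, havk⟩ := hV'base k hk
          have hkey : W k ∩ {y | ∃ p, ‖p‖ < M ∧ φ p y ∈ G k} =
              ⋃ p ∈ (hfin xk hxk).toFinset, (W k ∩ φ p ⁻¹' (G k)) := by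
            ext y
            simp only [Set.mem_inter_iff, Set.mem_setOf_eq, Set.mem_iUnion,
              Set.Finite.mem_toFinset]
            constructor
            · rintro ⟨hyW, p, hpM, hpG⟩
              have hpX : φ p y ∈ X := hGsub k hpG
              have : φ p xk ∈ X := (hpatk y (hWsubV k hyW) p hpM).1 hpX
              exact ⟨p, ⟨⟨hpM, this⟩, hyW, hpG⟩⟩
            · rintro ⟨p, ⟨hpM, _⟩, hyW, hpG⟩
              exact ⟨hyW, p, hpM, hpG⟩
          have hrem : RelCl X (⋃ p ∈ (hfin xk hxk).toFinset, (W k ∩ φ p ⁻¹' (G k))) := by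
            apply RelCl.biUnionFinset
            intro p hp
            rw [Set.Finite.mem_toFinset] at hp
            refine (hWrel k).inter_preimage ih (hφp p) ?_
            intro y hy
            exact (hpatk y (hWsubV k hy) p hp.1).2 hp.2
          have : W k \ {y | ∃ p, ‖p‖ < M ∧ φ p y ∈ G k} =
              W k \ (W k ∩ {y | ∃ p, ‖p‖ < M ∧ φ p y ∈ G k}) := by
            ext y; simp only [Set.mem_diff, Set.mem_inter_iff]; tauto
          rw [this, hkey]
          exact ih.union ((hWrel k).diff hrem)
        · have hWk : W k = ∅ := by
            simp only [hWdef, hV'def, dif_neg hk]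
            simp
          rw [hWk]
          simpa using ih
  -- the selected set
  refine ⟨G L.length, (hGrel L.length).clopenIn, ?_⟩
  -- separation within the groupoid
  have hsepU : ∀ y ∈ G L.length, ∀ p : EuclideanSpace ℝ (Fin d), ‖p‖ < M → p ≠ 0 → φ p y ∉ G L.length := by
    intro y hy p hp hp0 hc
    obtain ⟨i, hi, hyNG, hyW, hyNR⟩ := greedy_decomp hy
    obtain ⟨j, hj, hzNG, hzW, hzNR⟩ := greedy_decomp hc
    rcases lt_trichotomy i j with hij | rfl | hij
    · -- i < j : z sees y at an earlier stage
      exact hzNR ⟨-p, by rwa [norm_neg], by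
        rw [hinv]
        exact greedy_mono (Nat.succ_le_of_lt hij) (greedy_mem_succ hyW hyNR)⟩
    · -- same window: avoidance
      have hin : i < L.length := by
        by_contra hni
        have hmem := hWsubV i hyW
        simp only [hV'def, dif_neg hni] at hmem
        exact Set.notMem_empty y hmem
      obtain ⟨xk, hxk, hVeq, hpatk, havk⟩ := hV'base i hin
      exact havk y (hWsubV i hyW) p hp hp0 (hWsubV i hzW)
    · exact hyNR ⟨p, hp, greedy_mono (Nat.succ_le_of_lt hij) (greedy_mem_succ hzW hzNR)⟩
  -- maximality
  have hmax : ∀ y ∈ X, ∃ p : EuclideanSpace ℝ (Fin d), ‖p‖ < M ∧ φ p y ∈ G L.length := by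
    intro y hy
    obtain ⟨i, hi, hyW⟩ := hWcov y hy
    by_cases hrem : ∃ p, ‖p‖ < M ∧ φ p y ∈ G i
    · obtain ⟨p, hp1, hp2⟩ := hrem
      exact ⟨p, hp1, greedy_mono (Nat.le_of_lt hi) hp2⟩
    · refine ⟨0, by simpa using hMpos, ?_⟩
      rw [hzero]
      exact greedy_mono (Nat.succ_le_of_lt hi) (greedy_mem_succ hyW hrem)
  -- conclusion
  intro x hx
  constructor
  · intro p hp q hq hne
    by_contra hlt
    push_neg at hlt
    have hq' : φ q x ∈ G L.length := hq
    have hqX : φ q x ∈ X := hGsub L.length hq'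
    have h1 : φ (p - q) (φ q x) = φ p x := by rw [← hadd, sub_add_cancel]
    refine hsepU (φ q x) hq' (p - q) ?_ (sub_ne_zero.2 hne) ?_
    · rwa [← dist_eq_norm]
    · rw [h1]; exact hp
  · intro q
    obtain ⟨r, hr, hqr⟩ := hsyn x hx q
    obtain ⟨p, hpM, hpU⟩ := hmax (φ r x) hr
    refine ⟨p + r, ?_, ?_⟩
    · show φ (p + r) x ∈ G L.length
      rw [hadd]
      exact hpU
    · have h1 : dist q (p + r) ≤ dist q r + dist r (p + r) := dist_triangle q r (p + r)
      have h2 : dist r (p + r) = ‖p‖ := by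
        rw [dist_eq_norm]
        simp
      linarith
end
end

section
/- Under the standing assumptions on P and 𝒟, for every p ∈ P the open ball B(p, cM/(d+1)) is contained in T(p). In particular each cell T(p) contains an open ball of radius cM/(d+1). -/
noncomputable section

open scoped Classical

open Metric

variable {d : ℕ}

/-- `T(p,τ)`: the points of `Conv(τ)` whose barycentric coordinate at `p`
is maximal. -/
def Tcell (τ : Finset (EuclideanSpace ℝ (Fin d))) (p : EuclideanSpace ℝ (Fin d)) :
    Set (EuclideanSpace ℝ (Fin d)) :=
  {x | ∃ lam : EuclideanSpace ℝ (Fin d) → ℝ,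
    (∀ q ∈ τ, 0 ≤ lam q) ∧ (∑ q ∈ τ, lam q) = 1 ∧ (∀ q ∈ τ, lam q ≤ lam p) ∧
    x = ∑ q ∈ τ, lam q • q}

/-- `T(p) = ⋃_{τ ∈ 𝒟, p ∈ τ} T(p,τ)`. -/
def Tset (𝒟 : Set (Finset (EuclideanSpace ℝ (Fin d)))) (p : EuclideanSpace ℝ (Fin d)) :
    Set (EuclideanSpace ℝ (Fin d)) :=
  ⋃ τ ∈ {τ ∈ 𝒟 | p ∈ τ}, Tcell τ p

/-- `S(p) = ⋃_{τ ∈ 𝒟, p ∈ τ} Conv(τ)`. -/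
def Sset (𝒟 : Set (Finset (EuclideanSpace ℝ (Fin d)))) (p : EuclideanSpace ℝ (Fin d)) :
    Set (EuclideanSpace ℝ (Fin d)) :=
  ⋃ τ ∈ {τ ∈ 𝒟 | p ∈ τ}, convexHull ℝ (↑τ : Set (EuclideanSpace ℝ (Fin d)))

/-- Standing assumptions: `P` is `M`-separated and `2M`-syndetic and `𝒟` is a
collection of `(d+1)`-element affinely independent subsets of `P` such that:
(i) the sets `Conv(τ)`, `τ ∈ 𝒟`, cover `ℝ^d` with pairwise disjoint interiors;
(ii) any two cells meet face to face; (iii) every `p ∈ P` lies in some `τ ∈ 𝒟`;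
(iv) every `τ ∈ 𝒟` lies in a closed ball of radius `< √5·M`;
(v) `d(p, H(τ∖{p})) > c·M` for every `τ ∈ 𝒟` and `p ∈ τ`. -/
def Standing (M c : ℝ) (P : Set (EuclideanSpace ℝ (Fin d)))
    (𝒟 : Set (Finset (EuclideanSpace ℝ (Fin d)))) : Prop :=
  IsSeparatedSet M P ∧ IsSyndeticSet (2 * M) P ∧
  (∀ τ ∈ 𝒟, τ.card = d + 1 ∧ (↑τ : Set (EuclideanSpace ℝ (Fin d))) ⊆ P ∧
    AffineIndependent ℝ (fun q : (τ : Set (EuclideanSpace ℝ (Fin d))) =>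
      (q : EuclideanSpace ℝ (Fin d)))) ∧
  (⋃ τ ∈ 𝒟, convexHull ℝ (↑τ : Set (EuclideanSpace ℝ (Fin d)))) = Set.univ ∧
  (∀ τ ∈ 𝒟, ∀ τ' ∈ 𝒟, τ ≠ τ' →
    interior (convexHull ℝ (↑τ : Set (EuclideanSpace ℝ (Fin d)))) ∩
      interior (convexHull ℝ (↑τ' : Set (EuclideanSpace ℝ (Fin d)))) = ∅) ∧
  (∀ τ ∈ 𝒟, ∀ τ' ∈ 𝒟,
    convexHull ℝ (↑τ : Set (EuclideanSpace ℝ (Fin d))) ∩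
      convexHull ℝ (↑τ' : Set (EuclideanSpace ℝ (Fin d)))
    = convexHull ℝ (↑(τ ∩ τ') : Set (EuclideanSpace ℝ (Fin d)))) ∧
  (∀ p ∈ P, ∃ τ ∈ 𝒟, p ∈ τ) ∧
  (∀ τ ∈ 𝒟, ∃ z r, r < Real.sqrt 5 * M ∧
    (↑τ : Set (EuclideanSpace ℝ (Fin d))) ⊆ closedBall z r) ∧
  (∀ τ ∈ 𝒟, ∀ p ∈ τ,
    c * M < Metric.infDist p
      (affineSpan ℝ (↑(τ.erase p) : Set (EuclideanSpace ℝ (Fin d)))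
        : Set (EuclideanSpace ℝ (Fin d))))

lemma sep_fin' {M : ℝ} (hM : 0 < M) {P : Set (EuclideanSpace ℝ (Fin d))}
    (hP : IsSeparatedSet M P)
    (y : EuclideanSpace ℝ (Fin d)) (R : ℝ) : (P ∩ closedBall y R).Finite := by
  obtain ⟨t, htf, hcov⟩ := totallyBounded_iff.mp
    (isCompact_closedBall y R).totallyBounded (M/2) (by linarith)
  have hchoice : ∀ k ∈ P ∩ closedBall y R, ∃ z ∈ t, k ∈ ball z (M/2) := by
    intro k hk
    simpa using hcov hk.2
  choose! φ hφt hφ using hchoice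
  have hinj : Set.InjOn φ (P ∩ closedBall y R) := by
    intro k1 h1 k2 h2 he
    by_contra hne
    have b1 := hφ k1 h1
    have b2 := hφ k2 h2
    rw [he] at b1
    rw [mem_ball] at b1 b2
    rw [dist_comm] at b2
    have := dist_triangle k1 (φ k2) k2
    have hd : dist k1 k2 < M := by linarith
    exact absurd hd (not_lt.mpr (hP k1 h1.1 k2 h2.1 hne))
  exact Set.Finite.of_finite_image (htf.subset (by
    rintro _ ⟨k, hk, rfl⟩; exact hφt k hk)) hinj

lemma finsets_fin' {α : Type*} [DecidableEq α] {K : Set α} (hK : K.Finite) :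
    {σ : Finset α | (↑σ : Set α) ⊆ K}.Finite := by
  apply (hK.toFinset.powerset.finite_toSet).subset
  intro σ hσ
  simp only [Finset.mem_coe, Finset.mem_powerset]
  intro a ha
  exact hK.mem_toFinset.mpr (hσ ha)

/-- Under the standing assumptions, for every `p ∈ P` the open ball
`B(p, cM/(d+1))` is contained in `T(p)`. -/
theorem stmt12 (hd : 1 ≤ d) (M c : ℝ) (hM : 0 < M) (hc : 0 < c)
    (P : Set (EuclideanSpace ℝ (Fin d))) (𝒟 : Set (Finset (EuclideanSpace ℝ (Fin d))))
    (hS : Standing M c P 𝒟) (p : EuclideanSpace ℝ (Fin d)) (hp : p ∈ P) :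
    ball p (c * M / (d + 1)) ⊆ Tset 𝒟 p := by
  obtain ⟨hsep, hsyn, hcard, hcov, hdisj, hface, hmem, hballs, hdist⟩ := hS
  intro x hx
  rw [mem_ball, dist_comm] at hx
  -- hx : dist p x < c*M/(d+1); we mainly use dist x p
  have hdxp : dist x p < c * M / (d + 1) := by rwa [dist_comm]
  have hd1 : (1:ℝ) ≤ (d:ℝ) + 1 := by
    have := Nat.cast_nonneg (α := ℝ) d
    linarith
  have hrpos : 0 < c * M / (d + 1) := by positivity
  have hrle : c * M / (d + 1) ≤ c * M := by
    apply div_le_self (by positivity) hd1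
  have hsqrt5 : Real.sqrt 5 * M < 3 * M := by
    have h5 : Real.sqrt 5 < 3 := by
      rw [show (3:ℝ) = Real.sqrt 9 by
        rw [show (9:ℝ) = 3^2 by norm_num, Real.sqrt_sq]; norm_num]
      exact Real.sqrt_lt_sqrt (by norm_num) (by norm_num)
    nlinarith
  -- every cell is contained in the 6M-ball around any point of its hull
  have hcell_ball : ∀ τ ∈ 𝒟, ∀ u ∈ convexHull ℝ (↑τ : Set (EuclideanSpace ℝ (Fin d))),
      (↑τ : Set (EuclideanSpace ℝ (Fin d))) ⊆ closedBall u (6 * M) := by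
    intro τ hτ u hu q hq
    obtain ⟨z, r0, hr0, hzb⟩ := hballs τ hτ
    have hhull : convexHull ℝ (↑τ : Set (EuclideanSpace ℝ (Fin d))) ⊆ closedBall z r0 :=
      convexHull_min hzb (convex_closedBall z r0)
    have h1 : dist q z ≤ r0 := hzb hq
    have h2 : dist u z ≤ r0 := hhull hu
    rw [mem_closedBall]
    have := dist_triangle q z u
    rw [dist_comm u z] at h2
    linarith
  -- Step A: x ∈ Sset 𝒟 p
  have hStepA : ∃ τ ∈ 𝒟, p ∈ τ ∧ x ∈ convexHull ℝ (↑τ : Set (EuclideanSpace ℝ (Fin d))) := by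
    set g : ℝ → EuclideanSpace ℝ (Fin d) := fun t => p + t • (x - p) with hg
    have hgcont : Continuous g :=
      continuous_const.add (continuous_id.smul continuous_const)
    have hg0 : g 0 = p := by simp [hg]
    have hg1 : g 1 = x := by simp [hg]
    have hgdist : ∀ s t : ℝ, dist (g s) (g t) = |s - t| * ‖x - p‖ := by
      intro s t
      rw [dist_eq_norm]
      have : g s - g t = (s - t) • (x - p) := by
        simp only [hg]
        rw [sub_smul]
        abel
      rw [this, norm_smul, Real.norm_eq_abs]
    -- Sset is closed
    have hDfin : ∀ y : EuclideanSpace ℝ (Fin d), ∀ R : ℝ,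
        {σ : Finset (EuclideanSpace ℝ (Fin d)) | (↑σ : Set (EuclideanSpace ℝ (Fin d))) ⊆
          P ∩ closedBall y R}.Finite := fun y R => finsets_fin' (sep_fin' hM hsep y R)
    have hDp_fin : {τ ∈ 𝒟 | p ∈ τ}.Finite := by
      apply (hDfin p (6 * M)).subset
      rintro τ ⟨hτ, hpτ⟩
      intro q hq
      exact ⟨(hcard τ hτ).2.1 hq,
        hcell_ball τ hτ p (subset_convexHull ℝ _ hpτ) hq⟩
    have hSclosed : IsClosed (Sset 𝒟 p) :=
      hDp_fin.isClosed_biUnion fun τ _ => (τ.finite_toSet.isCompact_convexHull (𝕜 := ℝ)).isClosed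
    set A : Set ℝ := Set.Icc (0:ℝ) 1 ∩ g ⁻¹' (Sset 𝒟 p) with hA
    have hAclosed : IsClosed A := isClosed_Icc.inter (hSclosed.preimage hgcont)
    have h0A : (0:ℝ) ∈ A := by
      obtain ⟨τ₀, hτ₀, hpτ₀⟩ := hmem p hp
      refine ⟨by simp, ?_⟩
      simp only [Set.mem_preimage, hg0]
      exact Set.mem_biUnion (show τ₀ ∈ {τ ∈ 𝒟 | p ∈ τ} from ⟨hτ₀, hpτ₀⟩)
        (subset_convexHull ℝ _ hpτ₀)
    have hAbdd : BddAbove A := ⟨1, fun t ht => ht.1.2⟩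
    set t₀ : ℝ := sSup A with ht₀
    have ht₀A : t₀ ∈ A := hAclosed.csSup_mem ⟨0, h0A⟩ hAbdd
    have ht₀1 : t₀ = 1 := by
      by_contra hne
      have hlt : t₀ < 1 := lt_of_le_of_ne ht₀A.1.2 hne
      set y : EuclideanSpace ℝ (Fin d) := g t₀ with hy
      have hyp : dist y p ≤ dist x p := by
        have h1 : dist y p = |t₀| * ‖x - p‖ := by
          rw [hy, dist_eq_norm]
          have h2 : g t₀ - p = t₀ • (x - p) := by simp [hg]
          rw [h2, norm_smul, Real.norm_eq_abs]
        rw [h1, abs_of_nonneg ht₀A.1.1, dist_eq_norm]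
        exact mul_le_of_le_one_left (norm_nonneg _) ht₀A.1.2
      -- finite family of cells near y avoiding p
      set F : Set (Finset (EuclideanSpace ℝ (Fin d))) :=
        {σ ∈ 𝒟 | (↑σ : Set (EuclideanSpace ℝ (Fin d))) ⊆ P ∩ closedBall y (6 * M + 1) ∧
          p ∉ σ} with hF
      have hFfin : F.Finite := by
        apply (hDfin y (6 * M + 1)).subset
        rintro σ ⟨_, hσ, _⟩
        exact hσ
      set C : Set (EuclideanSpace ℝ (Fin d)) :=
        ⋃ σ ∈ F, convexHull ℝ (↑σ : Set (EuclideanSpace ℝ (Fin d))) with hC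
      have hCclosed : IsClosed C :=
        hFfin.isClosed_biUnion fun σ _ => (σ.finite_toSet.isCompact_convexHull (𝕜 := ℝ)).isClosed
      have hyC : y ∈ C := by
        rw [← hCclosed.closure_eq, Metric.mem_closure_iff]
        intro ε hε
        set δ : ℝ := min 1 ε / (‖x - p‖ + 1) with hδ
        have hδpos : 0 < δ := by
          apply div_pos (lt_min one_pos hε)
          positivity
        obtain ⟨t, htl, htr⟩ := exists_between (lt_min hlt (lt_add_of_pos_right t₀ hδpos))
        have ht1 : t < 1 := lt_of_lt_of_le htr (min_le_left _ _)
        have htδ : t - t₀ < δ := by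
          have := lt_of_lt_of_le htr (min_le_right _ _)
          linarith
        have hty : dist (g t) y < min 1 ε := by
          rw [hy, hgdist t t₀, abs_of_nonneg (by linarith)]
          calc (t - t₀) * ‖x - p‖ ≤ (t - t₀) * (‖x - p‖ + 1) := by
                apply mul_le_mul_of_nonneg_left (by linarith) (by linarith)
            _ < δ * (‖x - p‖ + 1) := by
                apply mul_lt_mul_of_pos_right htδ (by positivity)
            _ = min 1 ε := by
                rw [hδ, div_mul_cancel₀]
                positivity
        -- g t lies in some cell
        have hgt : g t ∈ ⋃ τ ∈ 𝒟, convexHull ℝ (↑τ : Set (EuclideanSpace ℝ (Fin d))) := by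
          rw [hcov]; trivial
        obtain ⟨σ, hσD, hgtσ⟩ := Set.mem_iUnion₂.mp hgt
        have hpσ : p ∉ σ := by
          intro hpσ
          have htA : t ∈ A := by
            refine ⟨⟨le_trans ht₀A.1.1 htl.le, ht1.le⟩, ?_⟩
            exact Set.mem_biUnion (show σ ∈ {τ ∈ 𝒟 | p ∈ τ} from ⟨hσD, hpσ⟩) hgtσ
          exact absurd (le_csSup hAbdd htA) (not_le.mpr htl)
        have hσF : σ ∈ F := by
          refine ⟨hσD, ?_, hpσ⟩
          intro q hq
          refine ⟨(hcard σ hσD).2.1 hq, ?_⟩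
          have h6 : dist q (g t) ≤ 6 * M := hcell_ball σ hσD (g t) hgtσ hq
          have h1' : dist (g t) y < 1 := lt_of_lt_of_le hty (min_le_left _ _)
          rw [mem_closedBall]
          have := dist_triangle q (g t) y
          linarith
        refine ⟨g t, Set.mem_biUnion hσF hgtσ, ?_⟩
        rw [dist_comm]
        exact lt_of_lt_of_le hty (min_le_right _ _)
      obtain ⟨σ, hσF, hyσ⟩ := Set.mem_iUnion₂.mp hyC
      obtain ⟨τ, hτ, hyτ⟩ := Set.mem_iUnion₂.mp ht₀A.2
      have hyint : y ∈ convexHull ℝ (↑(τ ∩ σ) : Set (EuclideanSpace ℝ (Fin d))) := by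
        rw [← hface τ hτ.1 σ hσF.1]
        exact ⟨hyτ, hyσ⟩
      have hsub : (↑(τ ∩ σ) : Set (EuclideanSpace ℝ (Fin d))) ⊆
          (↑(τ.erase p) : Set (EuclideanSpace ℝ (Fin d))) := by
        intro q hq
        simp only [Finset.coe_inter, Set.mem_inter_iff, Finset.mem_coe] at hq
        simp only [Finset.coe_erase, Set.mem_diff, Finset.mem_coe]
        refine ⟨hq.1, ?_⟩
        intro hqp
        rw [Set.mem_singleton_iff] at hqp
        exact hσF.2.2 (hqp ▸ hq.2)
      have hyH : y ∈ (affineSpan ℝ (↑(τ.erase p) : Set (EuclideanSpace ℝ (Fin d))) :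
          Set (EuclideanSpace ℝ (Fin d))) :=
        convexHull_subset_affineSpan _ (convexHull_mono hsub hyint)
      have hinf := hdist τ hτ.1 p hτ.2
      have hle : Metric.infDist p (affineSpan ℝ (↑(τ.erase p) :
          Set (EuclideanSpace ℝ (Fin d))) : Set (EuclideanSpace ℝ (Fin d))) ≤ dist p y :=
        Metric.infDist_le_dist_of_mem hyH
      rw [dist_comm] at hle
      linarith
    rw [ht₀1] at ht₀A
    obtain ⟨τ, hτ, hxτ⟩ := Set.mem_iUnion₂.mp (by
      have := ht₀A.2
      rwa [Set.mem_preimage, hg1] at this)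
    exact ⟨τ, hτ.1, hτ.2, hxτ⟩
  obtain ⟨τ, hτD, hpτ, hxτ⟩ := hStepA
  rw [Finset.convexHull_eq] at hxτ
  obtain ⟨w, hw0, hw1, hwx⟩ := hxτ
  have hx_eq : x = ∑ q ∈ τ, w q • q := by
    rw [← hwx, Finset.centerMass_eq_of_sum_1 _ _ hw1]
    rfl
  have hkey : ∀ q ∈ τ, q ≠ p → w q < 1 / ((d:ℝ) + 1) := by
    intro q hq hqp
    set s : Finset (EuclideanSpace ℝ (Fin d)) := τ.erase q with hs
    have hps : p ∈ s := Finset.mem_erase.mpr ⟨fun h => hqp h.symm, hpτ⟩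
    set H := affineSpan ℝ (↑s : Set (EuclideanSpace ℝ (Fin d))) with hH
    haveI : Nonempty H := ⟨⟨p, subset_affineSpan ℝ _ hps⟩⟩
    set y0 : EuclideanSpace ℝ (Fin d) := ↑(EuclideanGeometry.orthogonalProjection H q) with hy0
    have hy0H : y0 ∈ H := (EuclideanGeometry.orthogonalProjection H q).2
    have horth : q - y0 ∈ H.directionᗮ := by
      have h := EuclideanGeometry.vsub_orthogonalProjection_mem_direction_orthogonal H q
      rwa [vsub_eq_sub] at h
    have hdq : c * M < ‖q - y0‖ := by
      have h1 := hdist τ hτD q hq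
      have h2 : Metric.infDist q (H : Set (EuclideanSpace ℝ (Fin d))) ≤ dist q y0 :=
        Metric.infDist_le_dist_of_mem hy0H
      rw [dist_eq_norm] at h2
      exact lt_of_lt_of_le h1 h2
    have hcM : (0:ℝ) < c * M := by positivity
    have hqy0 : ‖q - y0‖ ≠ 0 := ne_of_gt (lt_trans hcM hdq)
    set n : EuclideanSpace ℝ (Fin d) := ‖q - y0‖⁻¹ • (q - y0) with hn
    have hnorth : n ∈ H.directionᗮ := Submodule.smul_mem _ _ horth
    have hzero : ∀ z, z ∈ H → (inner ℝ (z - y0) n : ℝ) = 0 := by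
      intro z hz
      have hmem : z - y0 ∈ H.direction := by
        have h := AffineSubspace.vsub_mem_direction hz hy0H
        rwa [vsub_eq_sub] at h
      exact Submodule.inner_right_of_mem_orthogonal hmem hnorth
    have hqn : (inner ℝ (q - y0) n : ℝ) = ‖q - y0‖ := by
      rw [hn, real_inner_smul_right, real_inner_self_eq_norm_mul_norm]
      field_simp
    have hxy0 : x - y0 = ∑ q' ∈ τ, w q' • (q' - y0) := by
      simp only [smul_sub]
      rw [Finset.sum_sub_distrib, ← Finset.sum_smul, hw1, one_smul, hx_eq]
    have hinner : (inner ℝ (x - y0) n : ℝ) = w q * ‖q - y0‖ := by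
      rw [hxy0, sum_inner, Finset.sum_eq_single_of_mem q hq]
      · rw [real_inner_smul_left, hqn]
      · intro q' hq' hne'
        rw [real_inner_smul_left,
          hzero q' (subset_affineSpan ℝ _ (Finset.mem_erase.mpr ⟨hne', hq'⟩)), mul_zero]
    have hsplitv : x - y0 = (x - p) + (p - y0) := by abel
    have hpzero : (inner ℝ (p - y0) n : ℝ) = 0 := hzero p (subset_affineSpan ℝ _ hps)
    have hbound : w q * ‖q - y0‖ ≤ ‖x - p‖ := by
      rw [← hinner, hsplitv, inner_add_left, hpzero, add_zero]
      have hnn : ‖n‖ = 1 := by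
        rw [hn, norm_smul, norm_inv, Real.norm_eq_abs, abs_of_nonneg (norm_nonneg _),
          inv_mul_cancel₀ hqy0]
      calc (inner ℝ (x - p) n : ℝ) ≤ ‖x - p‖ * ‖n‖ := real_inner_le_norm _ _
        _ = ‖x - p‖ := by rw [hnn, mul_one]
    have h2 : ‖x - p‖ < c * M / ((d:ℝ) + 1) := by rw [← dist_eq_norm]; exact hdxp
    have h3 : w q * (c * M) < (1 / ((d:ℝ) + 1)) * (c * M) := by
      calc w q * (c * M) ≤ w q * ‖q - y0‖ :=
            mul_le_mul_of_nonneg_left hdq.le (hw0 q hq)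
        _ ≤ ‖x - p‖ := hbound
        _ < c * M / ((d:ℝ) + 1) := h2
        _ = (1 / ((d:ℝ) + 1)) * (c * M) := by ring
    exact lt_of_mul_lt_mul_right h3 hcM.le
  have hdpos : (0:ℝ) < (d:ℝ) + 1 := by positivity
  have hcb : (τ.erase p).card = d := by
    rw [Finset.card_erase_of_mem hpτ, (hcard τ hτD).1]
    simp
  have hsum : ∑ q ∈ τ.erase p, w q < (d:ℝ) / ((d:ℝ) + 1) := by
    have hne : (τ.erase p).Nonempty := by
      rw [← Finset.card_pos, hcb]; exact hd
    calc ∑ q ∈ τ.erase p, w q < ∑ _q ∈ τ.erase p, (1 / ((d:ℝ)+1)) := by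
          apply Finset.sum_lt_sum_of_nonempty hne
          intro q hq
          exact hkey q (Finset.mem_of_mem_erase hq) (Finset.ne_of_mem_erase hq)
      _ = (d:ℝ) / ((d:ℝ) + 1) := by
          rw [Finset.sum_const, hcb, nsmul_eq_mul]
          ring
  have hwp : 1 / ((d:ℝ) + 1) < w p := by
    have hsplit : ∑ q ∈ τ.erase p, w q + w p = 1 := by
      rw [Finset.sum_erase_add τ w hpτ]; exact hw1
    have hfs : (1:ℝ) - (d:ℝ)/((d:ℝ)+1) = 1/((d:ℝ)+1) := by field_simp; ring
    linarith
  refine Set.mem_biUnion (show τ ∈ {τ' ∈ 𝒟 | p ∈ τ'} from ⟨hτD, hpτ⟩) ?_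
  refine ⟨w, hw0, hw1, ?_, hx_eq⟩
  intro q hq
  by_cases hqp : q = p
  · rw [hqp]
  · exact (lt_trans (hkey q hq hqp) hwp).le
end
end

section
/- Under the standing assumptions on P and 𝒟, for every p ∈ P and every 0 < λ < 1, each point of the set λ(S(p)−p)+p = {λ(q−p)+p : q ∈ S(p)} is at distance greater than (1−λ)·c·M from every point of the boundary ∂S(p). -/
noncomputable section

open scoped Classical

open Metric

variable {d : ℕ}

/-! ### Auxiliary machinery -/

/-- The affine basis attached to a cell. -/
noncomputable def bOf (τ : Finset (EuclideanSpace ℝ (Fin d))) (hcard : τ.card = d + 1)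
    (hind : AffineIndependent ℝ (fun q : (τ : Set (EuclideanSpace ℝ (Fin d))) =>
      (q : EuclideanSpace ℝ (Fin d)))) :
    AffineBasis ↥τ ℝ (EuclideanSpace ℝ (Fin d)) :=
  ⟨fun i => (i : EuclideanSpace ℝ (Fin d)), hind, by
    have h : Fintype.card ↥τ = Module.finrank ℝ (EuclideanSpace ℝ (Fin d)) + 1 := by
      simp [Fintype.card_coe, hcard, finrank_euclideanSpace_fin]
    exact (AffineIndependent.affineSpan_eq_top_iff_card_eq_finrank_add_one hind).mpr h⟩

@[simp] lemma bOf_apply (τ : Finset (EuclideanSpace ℝ (Fin d))) (hcard hind) (i : ↥τ) :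
    bOf τ hcard hind i = (i : EuclideanSpace ℝ (Fin d)) := rfl

lemma hull_eq_coord (τ : Finset (EuclideanSpace ℝ (Fin d))) (hcard hind) :
    convexHull ℝ (↑τ : Set (EuclideanSpace ℝ (Fin d))) =
      {x | ∀ i : ↥τ, 0 ≤ (bOf τ hcard hind).coord i x} := by
  rw [← AffineBasis.convexHull_eq_nonneg_coord (bOf τ hcard hind)]
  congr 1
  exact (Subtype.range_coe_subtype (p := fun x => x ∈ τ)).symm

/-- coordinate of a convex (affine) combination supported on a subset `σ ⊆ τ`. -/
lemma coord_of_rep (τ : Finset (EuclideanSpace ℝ (Fin d))) (hcard hind)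
    (σ : Finset (EuclideanSpace ℝ (Fin d))) (hσ : σ ⊆ τ)
    (w : EuclideanSpace ℝ (Fin d) → ℝ) (hsum : ∑ q ∈ σ, w q = 1)
    (x : EuclideanSpace ℝ (Fin d)) (hx : x = ∑ q ∈ σ, w q • q) (i : ↥τ) :
    (bOf τ hcard hind).coord i x = if (i : EuclideanSpace ℝ (Fin d)) ∈ σ then w i else 0 := by
  set b := bOf τ hcard hind
  set W : ↥τ → ℝ := fun j => if (j : EuclideanSpace ℝ (Fin d)) ∈ σ then w j else 0 with hW
  have hτσ : τ ∩ σ = σ := Finset.inter_eq_right.mpr hσ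
  have hWsum : ∑ j : ↥τ, W j = 1 := by
    rw [show (∑ j : ↥τ, W j) = ∑ q ∈ τ, (if q ∈ σ then w q else 0) from
      Finset.sum_coe_sort τ (fun q => if q ∈ σ then w q else 0)]
    rw [Finset.sum_ite_mem, hτσ, hsum]
  have hcomb : Finset.univ.affineCombination ℝ (⇑b) W = x := by
    rw [Finset.univ.affineCombination_eq_linear_combination _ _ hWsum]
    have : (∑ j : ↥τ, W j • (b j)) = ∑ q ∈ τ, (if q ∈ σ then w q • q else 0) := by
      rw [← Finset.sum_coe_sort τ (fun q => if q ∈ σ then w q • q else 0)]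
      refine Finset.sum_congr rfl fun j _ => ?_
      by_cases h : (j : EuclideanSpace ℝ (Fin d)) ∈ σ <;> simp [hW, h, b]
    rw [this, Finset.sum_ite_mem, hτσ, hx]
  have := (bOf τ hcard hind).coord_apply_combination_of_mem (Finset.mem_univ i) hWsum
  rw [hcomb] at this
  simpa [hW] using this

/-- A point whose `p`-th coordinate vanishes lies in the affine span of the facet
opposite to `p`. -/
lemma erase_span (τ : Finset (EuclideanSpace ℝ (Fin d))) (hcard hind)
    (p : EuclideanSpace ℝ (Fin d)) (hp : p ∈ τ) (x : EuclideanSpace ℝ (Fin d))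
    (hx0 : (bOf τ hcard hind).coord ⟨p, hp⟩ x = 0) :
    x ∈ affineSpan ℝ (↑(τ.erase p) : Set (EuclideanSpace ℝ (Fin d))) := by
  set b := bOf τ hcard hind with hb
  set w' : EuclideanSpace ℝ (Fin d) → ℝ :=
    fun q => if hq : q ∈ τ then b.coord ⟨q, hq⟩ x else 0 with hw'
  have hwj : ∀ j : ↥τ, w' (j : EuclideanSpace ℝ (Fin d)) = b.coord j x := by
    intro j; simp [hw']
  have hsumτ : ∑ q ∈ τ, w' q = 1 := by
    rw [← Finset.sum_coe_sort τ w']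
    simp only [hwj]
    exact b.sum_coord_apply_eq_one x
  have hwp : w' p = 0 := by simp only [hw', dif_pos hp]; exact hx0
  have hxτ : ∑ q ∈ τ, w' q • q = x := by
    have h1 := b.affineCombination_coord_eq_self x
    rw [Finset.univ.affineCombination_eq_linear_combination _ _ (b.sum_coord_apply_eq_one x)] at h1
    rw [← Finset.sum_coe_sort τ (fun q => w' q • q)]
    simp only [hwj]
    simpa [hb] using h1
  have hsum_e : ∑ q ∈ τ.erase p, w' q = 1 := by
    rw [Finset.sum_erase _ hwp, hsumτ]
  have hx_e : ∑ q ∈ τ.erase p, w' q • q = x := by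
    rw [Finset.sum_erase _ (by rw [hwp, zero_smul]), hxτ]
  have hsum' : ∑ i : ↥(τ.erase p), w' (i : EuclideanSpace ℝ (Fin d)) = 1 := by
    rw [Finset.sum_coe_sort (τ.erase p) w']; exact hsum_e
  have hmem := affineCombination_mem_affineSpan (k := ℝ)
    (s := (Finset.univ : Finset ↥(τ.erase p)))
    (w := fun i => w' (i : EuclideanSpace ℝ (Fin d))) hsum'
    (fun i : ↥(τ.erase p) => (i : EuclideanSpace ℝ (Fin d)))
  have hcomb : (Finset.univ : Finset ↥(τ.erase p)).affineCombination ℝ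
      (fun i : ↥(τ.erase p) => (i : EuclideanSpace ℝ (Fin d)))
      (fun i => w' (i : EuclideanSpace ℝ (Fin d))) = x := by
    rw [Finset.univ.affineCombination_eq_linear_combination _ _ hsum']
    rw [Finset.sum_coe_sort (τ.erase p) (fun q => w' q • q)]
    exact hx_e
  rw [hcomb] at hmem
  rwa [show (Set.range fun i : ↥(τ.erase p) => (i : EuclideanSpace ℝ (Fin d))) =
    (↑(τ.erase p) : Set (EuclideanSpace ℝ (Fin d))) from Subtype.range_coe_subtype] at hmem

/-- Lipschitz bound for a barycentric coordinate in terms of the vertex-facet distance. -/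
lemma coord_lip (τ : Finset (EuclideanSpace ℝ (Fin d))) (hcard hind)
    (p : EuclideanSpace ℝ (Fin d)) (hp : p ∈ τ) (D : ℝ) (hD : 0 < D)
    (hDle : D ≤ Metric.infDist p
      (affineSpan ℝ (↑(τ.erase p) : Set (EuclideanSpace ℝ (Fin d)))
        : Set (EuclideanSpace ℝ (Fin d))))
    (x y : EuclideanSpace ℝ (Fin d)) :
    |(bOf τ hcard hind).coord ⟨p, hp⟩ x - (bOf τ hcard hind).coord ⟨p, hp⟩ y|
      ≤ dist x y / D := by
  set b := bOf τ hcard hind with hb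
  set f := b.coord ⟨p, hp⟩ with hf
  have key : ∀ v : EuclideanSpace ℝ (Fin d), |f.linear v| ≤ ‖v‖ / D := by
    intro v
    by_cases h : f.linear v = 0
    · rw [h, abs_zero]; positivity
    · set h₀ : EuclideanSpace ℝ (Fin d) := p - (f.linear v)⁻¹ • v with hh₀
      have hfp : f p = 1 := b.coord_apply_eq ⟨p, hp⟩
      have hfh : f h₀ = 0 := by
        have hv : f h₀ - f p = f.linear (h₀ - p) := by
          have := f.linearMap_vsub h₀ p
          simpa [vsub_eq_sub] using this.symm
        have : f h₀ - f p = -1 := by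
          rw [hv, hh₀]
          simp only [sub_sub_cancel_left]
          rw [map_neg, map_smul]
          simp [h]
        linarith [hfp, this]
      have hmem : h₀ ∈ affineSpan ℝ (↑(τ.erase p) : Set (EuclideanSpace ℝ (Fin d))) :=
        erase_span τ hcard hind p hp h₀ (by rw [← hf]; exact hfh)
      have hdist : D ≤ dist p h₀ := le_trans hDle (Metric.infDist_le_dist_of_mem hmem)
      have hnorm : dist p h₀ = |f.linear v|⁻¹ * ‖v‖ := by
        rw [dist_eq_norm, hh₀]
        simp only [sub_sub_cancel]
        rw [norm_smul, norm_inv, Real.norm_eq_abs]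
      have habs : 0 < |f.linear v| := abs_pos.mpr h
      rw [le_div_iff₀ hD]
      calc |f.linear v| * D ≤ |f.linear v| * (|f.linear v|⁻¹ * ‖v‖) := by
            apply mul_le_mul_of_nonneg_left _ (le_of_lt habs)
            rw [← hnorm]; exact hdist
        _ = ‖v‖ := by field_simp
  have hxy : f x - f y = f.linear (x - y) := by
    have := f.linearMap_vsub x y
    simpa [vsub_eq_sub] using this.symm
  rw [hxy, dist_eq_norm]
  exact key (x - y)

/-- Passing through finitely many closed pieces along `[0,1]`, with a Lipschitz-type
bound on every piece, yields a global bound between the endpoints. -/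
lemma segLip {ι : Type*} [Finite ι] (I : ι → Set ℝ) (hcl : ∀ i, IsClosed (I i))
    (hcov : Set.Icc (0:ℝ) 1 ⊆ ⋃ i, I i)
    (g : ℝ → ℝ) (L : ℝ)
    (hg : ∀ i, ∀ s ∈ I i, ∀ t ∈ I i, |g t - g s| ≤ L * |t - s|) :
    |g 1 - g 0| ≤ L := by
  set A : Set ℝ := {t ∈ Set.Icc (0:ℝ) 1 | |g t - g 0| ≤ L * t} with hA
  have h0A : (0:ℝ) ∈ A := by simp [hA]
  have hanb : A.Nonempty := ⟨0, h0A⟩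
  have hbdd : BddAbove A := ⟨1, fun t ht => ht.1.2⟩
  set u := sSup A with hu
  have hu0 : 0 ≤ u := le_csSup hbdd h0A
  have hu1 : u ≤ 1 := csSup_le hanb fun t ht => ht.1.2
  have huI : u ∈ Set.Icc (0:ℝ) 1 := ⟨hu0, hu1⟩
  have hδ : ∃ δ > 0, ∀ i, ∀ t ∈ I i, |t - u| < δ → u ∈ I i := by
    set C : Set ℝ := ⋃ i ∈ {i | u ∉ I i}, I i with hC
    have hCcl : IsClosed C := (Set.toFinite _).isClosed_biUnion fun i _ => hcl i
    have huC : u ∉ C := by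
      intro h
      obtain ⟨i, hi, hmem⟩ := Set.mem_iUnion₂.mp h
      exact hi hmem
    obtain ⟨δ, hδpos, hball⟩ := Metric.mem_nhds_iff.mp (hCcl.isOpen_compl.mem_nhds huC)
    refine ⟨δ, hδpos, fun i t htI hdist => ?_⟩
    by_contra hui
    have : t ∈ C := Set.mem_iUnion₂.mpr ⟨i, hui, htI⟩
    exact (hball (by simpa [Real.dist_eq] using hdist)) this
  obtain ⟨δ, hδpos, hδ⟩ := hδ
  have huA : u ∈ A := by
    obtain ⟨t, htA, htlt⟩ := exists_lt_of_lt_csSup hanb (show u - δ < u by linarith)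
    have htu : t ≤ u := le_csSup hbdd htA
    obtain ⟨i, hiI⟩ := Set.mem_iUnion.mp (hcov htA.1)
    have huIi : u ∈ I i := hδ i t hiI (by rw [abs_sub_lt_iff]; constructor <;> linarith)
    refine ⟨huI, ?_⟩
    calc |g u - g 0| ≤ |g u - g t| + |g t - g 0| := by
          linarith [abs_sub_le (g u) (g t) (g 0)]
      _ ≤ L * |u - t| + L * t := by
          have h2 := htA.2
          have h3 := hg i t hiI u huIi
          linarith
      _ ≤ L * u := by
          rw [abs_of_nonneg (by linarith)]
          have := htA.1.1
          nlinarith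
  by_cases hu1' : u = 1
  · have := huA.2; rw [hu1'] at this; simpa using this
  · exfalso
    have hult : u < 1 := lt_of_le_of_ne hu1 hu1'
    set t := min 1 (u + δ/2) with ht
    have htgt : u < t := by
      rcases min_cases 1 (u + δ/2) with ⟨h, _⟩ | ⟨h, _⟩ <;> rw [ht, h] <;> linarith
    have htI : t ∈ Set.Icc (0:ℝ) 1 := ⟨by positivity, min_le_left _ _⟩
    obtain ⟨i, hiI⟩ := Set.mem_iUnion.mp (hcov htI)
    have huIi : u ∈ I i := by
      apply hδ i t hiI
      have : t ≤ u + δ/2 := min_le_right _ _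
      rw [abs_sub_lt_iff]; constructor <;> linarith
    have htA : t ∈ A := by
      refine ⟨htI, ?_⟩
      calc |g t - g 0| ≤ |g t - g u| + |g u - g 0| := abs_sub_le _ _ _
        _ ≤ L * |t - u| + L * u := by
            have := hg i u huIi t hiI
            have := huA.2
            linarith
        _ ≤ L * t := by
            rw [abs_of_nonneg (by linarith)]
            nlinarith
    exact absurd (le_csSup hbdd htA) (not_le.mpr htgt)

/-- An `M`-separated set meets every closed ball in a finite set. -/
lemma sep_finite {M : ℝ} (hM : 0 < M) {P : Set (EuclideanSpace ℝ (Fin d))}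
    (hsep : IsSeparatedSet M P) (z : EuclideanSpace ℝ (Fin d)) (R : ℝ) :
    (P ∩ Metric.closedBall z R).Finite := by
  by_contra h
  have hinf : (P ∩ Metric.closedBall z R).Infinite := h
  obtain ⟨x, _, hacc⟩ := hinf.exists_accPt_of_subset_isCompact
    (isCompact_closedBall z R) Set.inter_subset_right
  rw [accPt_iff_nhds] at hacc
  obtain ⟨a, ⟨haB, haC⟩, hax⟩ := hacc (Metric.ball x (M/2))
    (Metric.ball_mem_nhds _ (by linarith))
  have hdax : 0 < dist a x := dist_pos.mpr hax
  obtain ⟨b, ⟨hbB, hbC⟩, hbx⟩ := hacc (Metric.ball x (min (M/2) (dist a x)))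
    (Metric.ball_mem_nhds _ (lt_min (by linarith) hdax))
  rw [Metric.mem_ball] at haB hbB
  have hba : b ≠ a := by
    intro hba; rw [hba] at hbB
    exact absurd (lt_min_iff.mp hbB).2 (lt_irrefl _)
  have hsepab := hsep a haC.1 b hbC.1 (Ne.symm hba)
  have : dist a b < M := by
    have h1 : dist b x < M/2 := (lt_min_iff.mp hbB).1
    calc dist a b ≤ dist a x + dist x b := dist_triangle _ _ _
      _ < M/2 + M/2 := by rw [dist_comm x b]; exact add_lt_add haB h1
      _ = M := by ring
  linarith

/-- Only finitely many cells come close to any given point. -/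
lemma cells_near_finite {M : ℝ} (hM : 0 < M) {P : Set (EuclideanSpace ℝ (Fin d))}
    (hsep : IsSeparatedSet M P) {𝒟 : Set (Finset (EuclideanSpace ℝ (Fin d)))}
    (hsubP : ∀ τ ∈ 𝒟, (↑τ : Set (EuclideanSpace ℝ (Fin d))) ⊆ P)
    (hball : ∀ τ ∈ 𝒟, ∃ z r, r < Real.sqrt 5 * M ∧
      (↑τ : Set (EuclideanSpace ℝ (Fin d))) ⊆ Metric.closedBall z r)
    (z : EuclideanSpace ℝ (Fin d)) :
    {τ ∈ 𝒟 | ∃ x ∈ convexHull ℝ (↑τ : Set (EuclideanSpace ℝ (Fin d))), dist x z < 1}.Finite := by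
  set R : ℝ := 2 * (Real.sqrt 5 * M) + 1 with hR
  set F : Set (EuclideanSpace ℝ (Fin d)) := P ∩ Metric.closedBall z R with hF
  have hFfin : F.Finite := sep_finite hM hsep z R
  have hsubF : ∀ τ ∈ {τ ∈ 𝒟 | ∃ x ∈ convexHull ℝ (↑τ : Set (EuclideanSpace ℝ (Fin d))),
      dist x z < 1}, (↑τ : Set (EuclideanSpace ℝ (Fin d))) ⊆ F := by
    rintro τ ⟨hτD, x, hxhull, hxz⟩ q hq
    obtain ⟨w, r, hr, hsub⟩ := hball τ hτD
    have hhull : convexHull ℝ (↑τ : Set (EuclideanSpace ℝ (Fin d))) ⊆ Metric.closedBall w r :=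
      convexHull_min hsub (convex_closedBall w r)
    have hqw : dist q w ≤ r := hsub hq
    have hwx : dist w x ≤ r := by rw [dist_comm]; exact hhull hxhull
    refine ⟨hsubP τ hτD hq, ?_⟩
    rw [Metric.mem_closedBall]
    calc dist q z ≤ dist q w + dist w x + dist x z := dist_triangle4 _ _ _ _
      _ ≤ r + r + 1 := by linarith
      _ ≤ R := by rw [hR]; linarith
  have hfin2 : {s : Set (EuclideanSpace ℝ (Fin d)) | s ⊆ F}.Finite :=
    Set.Finite.finite_subsets hFfin
  have hsub3 : {τ ∈ 𝒟 | ∃ x ∈ convexHull ℝ (↑τ : Set (EuclideanSpace ℝ (Fin d))),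
      dist x z < 1} ⊆
      (fun τ : Finset (EuclideanSpace ℝ (Fin d)) =>
        (↑τ : Set (EuclideanSpace ℝ (Fin d)))) ⁻¹' {s | s ⊆ F} := fun τ hτ => hsubF τ hτ
  exact Set.Finite.subset (Set.Finite.preimage
    (Set.injOn_of_injective Finset.coe_injective) hfin2) hsub3

lemma rep_of_mem_hull_inter (τ τ' : Finset (EuclideanSpace ℝ (Fin d)))
    (x : EuclideanSpace ℝ (Fin d))
    (hx : x ∈ convexHull ℝ (↑(τ ∩ τ') : Set (EuclideanSpace ℝ (Fin d)))) :
    ∃ w : EuclideanSpace ℝ (Fin d) → ℝ, (∀ q ∈ τ ∩ τ', 0 ≤ w q) ∧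
      (∑ q ∈ τ ∩ τ', w q = 1) ∧ x = ∑ q ∈ τ ∩ τ', w q • q := by
  rw [Finset.convexHull_eq] at hx
  obtain ⟨w, hw0, hw1, hwc⟩ := hx
  exact ⟨w, hw0, hw1, by rw [← hwc, Finset.centerMass_eq_of_sum_1 _ _ hw1]; rfl⟩

/-- Well-definedness of the `p`-th barycentric coordinate across cells. -/
lemma coordp_welldef {𝒟 : Set (Finset (EuclideanSpace ℝ (Fin d)))}
    (hface : ∀ τ ∈ 𝒟, ∀ τ' ∈ 𝒟,
      convexHull ℝ (↑τ : Set (EuclideanSpace ℝ (Fin d))) ∩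
        convexHull ℝ (↑τ' : Set (EuclideanSpace ℝ (Fin d)))
      = convexHull ℝ (↑(τ ∩ τ') : Set (EuclideanSpace ℝ (Fin d))))
    {τ τ' : Finset (EuclideanSpace ℝ (Fin d))} (hτ : τ ∈ 𝒟) (hτ' : τ' ∈ 𝒟)
    (hcard hind hcard' hind')
    {p : EuclideanSpace ℝ (Fin d)} (hpτ : p ∈ τ) (hpτ' : p ∈ τ')
    {x : EuclideanSpace ℝ (Fin d)}
    (hxτ : x ∈ convexHull ℝ (↑τ : Set (EuclideanSpace ℝ (Fin d))))
    (hxτ' : x ∈ convexHull ℝ (↑τ' : Set (EuclideanSpace ℝ (Fin d)))) :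
    (bOf τ hcard hind).coord ⟨p, hpτ⟩ x = (bOf τ' hcard' hind').coord ⟨p, hpτ'⟩ x := by
  have hx2 : x ∈ convexHull ℝ (↑(τ ∩ τ') : Set (EuclideanSpace ℝ (Fin d))) := by
    rw [← hface τ hτ τ' hτ']; exact ⟨hxτ, hxτ'⟩
  obtain ⟨w, hw0, hw1, hwr⟩ := rep_of_mem_hull_inter τ τ' x hx2
  rw [coord_of_rep τ hcard hind (τ ∩ τ') Finset.inter_subset_left w hw1 x hwr,
    coord_of_rep τ' hcard' hind' (τ ∩ τ') Finset.inter_subset_right w hw1 x hwr]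

/-- If the `p`-coordinate in `τ` is positive and `x` also lies in cell `τ'`, then `p ∈ τ'`. -/
lemma coordp_pos_mem {𝒟 : Set (Finset (EuclideanSpace ℝ (Fin d)))}
    (hface : ∀ τ ∈ 𝒟, ∀ τ' ∈ 𝒟,
      convexHull ℝ (↑τ : Set (EuclideanSpace ℝ (Fin d))) ∩
        convexHull ℝ (↑τ' : Set (EuclideanSpace ℝ (Fin d)))
      = convexHull ℝ (↑(τ ∩ τ') : Set (EuclideanSpace ℝ (Fin d))))
    {τ τ' : Finset (EuclideanSpace ℝ (Fin d))} (hτ : τ ∈ 𝒟) (hτ' : τ' ∈ 𝒟)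
    (hcard hind)
    {p : EuclideanSpace ℝ (Fin d)} (hpτ : p ∈ τ)
    {x : EuclideanSpace ℝ (Fin d)}
    (hxτ : x ∈ convexHull ℝ (↑τ : Set (EuclideanSpace ℝ (Fin d))))
    (hxτ' : x ∈ convexHull ℝ (↑τ' : Set (EuclideanSpace ℝ (Fin d))))
    (hpos : 0 < (bOf τ hcard hind).coord ⟨p, hpτ⟩ x) : p ∈ τ' := by
  have hx2 : x ∈ convexHull ℝ (↑(τ ∩ τ') : Set (EuclideanSpace ℝ (Fin d))) := by
    rw [← hface τ hτ τ' hτ']; exact ⟨hxτ, hxτ'⟩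
  obtain ⟨w, hw0, hw1, hwr⟩ := rep_of_mem_hull_inter τ τ' x hx2
  rw [coord_of_rep τ hcard hind (τ ∩ τ') Finset.inter_subset_left w hw1 x hwr] at hpos
  by_contra hne
  have : p ∉ τ ∩ τ' := by simp [hne]
  rw [if_neg this] at hpos
  exact lt_irrefl _ hpos

lemma mem_Sset_iff {𝒟 : Set (Finset (EuclideanSpace ℝ (Fin d)))}
    {p x : EuclideanSpace ℝ (Fin d)} :
    x ∈ Sset 𝒟 p ↔ ∃ τ, τ ∈ 𝒟 ∧ p ∈ τ ∧
      x ∈ convexHull ℝ (↑τ : Set (EuclideanSpace ℝ (Fin d))) := by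
  unfold Sset
  simp only [Set.mem_iUnion, Set.mem_setOf_eq, exists_prop]
  constructor
  · rintro ⟨τ, ⟨h1, h2⟩, h3⟩; exact ⟨τ, h1, h2, h3⟩
  · rintro ⟨τ, h1, h2, h3⟩; exact ⟨τ, ⟨h1, h2⟩, h3⟩

/-- A point of a cell whose `p`-coordinate is positive lies in the interior of `S(p)`. -/
lemma mem_interior_Sset {M : ℝ} (hM : 0 < M) {P : Set (EuclideanSpace ℝ (Fin d))}
    (hsep : IsSeparatedSet M P) {𝒟 : Set (Finset (EuclideanSpace ℝ (Fin d)))}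
    (hsubP : ∀ τ ∈ 𝒟, (↑τ : Set (EuclideanSpace ℝ (Fin d))) ⊆ P)
    (hball : ∀ τ ∈ 𝒟, ∃ z r, r < Real.sqrt 5 * M ∧
      (↑τ : Set (EuclideanSpace ℝ (Fin d))) ⊆ Metric.closedBall z r)
    (hcover : (⋃ τ ∈ 𝒟, convexHull ℝ (↑τ : Set (EuclideanSpace ℝ (Fin d)))) = Set.univ)
    (hface : ∀ τ ∈ 𝒟, ∀ τ' ∈ 𝒟,
      convexHull ℝ (↑τ : Set (EuclideanSpace ℝ (Fin d))) ∩
        convexHull ℝ (↑τ' : Set (EuclideanSpace ℝ (Fin d)))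
      = convexHull ℝ (↑(τ ∩ τ') : Set (EuclideanSpace ℝ (Fin d))))
    {τ : Finset (EuclideanSpace ℝ (Fin d))} (hτ : τ ∈ 𝒟) (hcard hind)
    {p : EuclideanSpace ℝ (Fin d)} (hpτ : p ∈ τ)
    {z : EuclideanSpace ℝ (Fin d)}
    (hz : z ∈ convexHull ℝ (↑τ : Set (EuclideanSpace ℝ (Fin d))))
    (hpos : 0 < (bOf τ hcard hind).coord ⟨p, hpτ⟩ z) :
    z ∈ interior (Sset 𝒟 p) := by
  set 𝒞 : Set (Finset (EuclideanSpace ℝ (Fin d))) :=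
    {τ' ∈ 𝒟 | ∃ x ∈ convexHull ℝ (↑τ' : Set (EuclideanSpace ℝ (Fin d))), dist x z < 1} with h𝒞
  have h𝒞fin : 𝒞.Finite := cells_near_finite hM hsep hsubP hball z
  set 𝒞' : Set (Finset (EuclideanSpace ℝ (Fin d))) :=
    {τ' ∈ 𝒞 | z ∉ convexHull ℝ (↑τ' : Set (EuclideanSpace ℝ (Fin d)))} with h𝒞'
  set U : Set (EuclideanSpace ℝ (Fin d)) :=
    ⋃ τ' ∈ 𝒞', convexHull ℝ (↑τ' : Set (EuclideanSpace ℝ (Fin d))) with hU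
  have hUcl : IsClosed U :=
    (h𝒞fin.subset (Set.sep_subset _ _)).isClosed_biUnion
      fun τ' _ => (τ'.finite_toSet).isClosed_convexHull (𝕜 := ℝ)
  have hzU : z ∉ U := by
    intro h
    obtain ⟨τ', hτ'mem, hmem⟩ := Set.mem_iUnion₂.mp h
    exact hτ'mem.2 hmem
  obtain ⟨ε, hεpos, hball'⟩ := Metric.mem_nhds_iff.mp (hUcl.isOpen_compl.mem_nhds hzU)
  set ε' : ℝ := min ε 1 with hε'
  have hε'pos : 0 < ε' := lt_min hεpos one_pos
  apply mem_interior.mpr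
  refine ⟨Metric.ball z ε', ?_, Metric.isOpen_ball, Metric.mem_ball_self hε'pos⟩
  intro x hx
  have hx𝒟 : x ∈ ⋃ τ'' ∈ 𝒟, convexHull ℝ (↑τ'' : Set (EuclideanSpace ℝ (Fin d))) := by
    rw [hcover]; trivial
  obtain ⟨τ'', hτ''D, hxhull⟩ := Set.mem_iUnion₂.mp hx𝒟
  have hdxz : dist x z < ε' := Metric.mem_ball.mp hx
  have hτ''𝒞 : τ'' ∈ 𝒞 := ⟨hτ''D, x, hxhull, lt_of_lt_of_le hdxz (min_le_right _ _)⟩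
  have hxU : x ∉ U := by
    have hxball : x ∈ Metric.ball z ε :=
      Metric.mem_ball.mpr (lt_of_lt_of_le hdxz (min_le_left _ _))
    exact fun h => (hball' hxball) h
  have hzτ'' : z ∈ convexHull ℝ (↑τ'' : Set (EuclideanSpace ℝ (Fin d))) := by
    by_contra hne
    exact hxU (Set.mem_iUnion₂.mpr ⟨τ'', ⟨hτ''𝒞, hne⟩, hxhull⟩)
  have hpτ'' : p ∈ τ'' := coordp_pos_mem hface hτ hτ''D hcard hind hpτ hz hzτ'' hpos
  exact mem_Sset_iff.mpr ⟨τ'', hτ''D, hpτ'', hxhull⟩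

/-- The globally defined `p`-th barycentric coordinate function. -/
noncomputable def gcoord (𝒟 : Set (Finset (EuclideanSpace ℝ (Fin d))))
    (hcard : ∀ τ ∈ 𝒟, τ.card = d + 1)
    (hind : ∀ τ ∈ 𝒟, AffineIndependent ℝ (fun q : (τ : Set (EuclideanSpace ℝ (Fin d))) =>
      (q : EuclideanSpace ℝ (Fin d))))
    (p x : EuclideanSpace ℝ (Fin d)) : ℝ :=
  if h : ∃ τ, τ ∈ 𝒟 ∧ p ∈ τ ∧ x ∈ convexHull ℝ (↑τ : Set (EuclideanSpace ℝ (Fin d))) then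
    (bOf h.choose (hcard _ h.choose_spec.1) (hind _ h.choose_spec.1)).coord
      ⟨p, h.choose_spec.2.1⟩ x
  else 0

lemma gcoord_eq {𝒟 : Set (Finset (EuclideanSpace ℝ (Fin d)))}
    (hcard : ∀ τ ∈ 𝒟, τ.card = d + 1)
    (hind : ∀ τ ∈ 𝒟, AffineIndependent ℝ (fun q : (τ : Set (EuclideanSpace ℝ (Fin d))) =>
      (q : EuclideanSpace ℝ (Fin d))))
    (hface : ∀ τ ∈ 𝒟, ∀ τ' ∈ 𝒟,
      convexHull ℝ (↑τ : Set (EuclideanSpace ℝ (Fin d))) ∩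
        convexHull ℝ (↑τ' : Set (EuclideanSpace ℝ (Fin d)))
      = convexHull ℝ (↑(τ ∩ τ') : Set (EuclideanSpace ℝ (Fin d))))
    {τ : Finset (EuclideanSpace ℝ (Fin d))} (hτ : τ ∈ 𝒟)
    {p : EuclideanSpace ℝ (Fin d)} (hpτ : p ∈ τ)
    {x : EuclideanSpace ℝ (Fin d)}
    (hx : x ∈ convexHull ℝ (↑τ : Set (EuclideanSpace ℝ (Fin d)))) :
    gcoord 𝒟 hcard hind p x = (bOf τ (hcard τ hτ) (hind τ hτ)).coord ⟨p, hpτ⟩ x := by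
  have h : ∃ τ, τ ∈ 𝒟 ∧ p ∈ τ ∧
      x ∈ convexHull ℝ (↑τ : Set (EuclideanSpace ℝ (Fin d))) := ⟨τ, hτ, hpτ, hx⟩
  rw [gcoord, dif_pos h]
  exact coordp_welldef hface h.choose_spec.1 hτ _ _ _ _ h.choose_spec.2.1 hpτ
    h.choose_spec.2.2 hx


set_option maxHeartbeats 2000000 in
/-- Under the standing assumptions, for every `p ∈ P` and `0 < λ < 1`, each point of
`λ(S(p) − p) + p` is at distance greater than `(1−λ)·c·M` from every point of the
boundary of `S(p)`. -/
theorem stmt13 (hd : 1 ≤ d) (M c : ℝ) (hM : 0 < M) (hc : 0 < c)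
    (P : Set (EuclideanSpace ℝ (Fin d))) (𝒟 : Set (Finset (EuclideanSpace ℝ (Fin d))))
    (hS : Standing M c P 𝒟) (p : EuclideanSpace ℝ (Fin d)) (hp : p ∈ P)
    (lam : ℝ) (h0 : 0 < lam) (h1 : lam < 1) :
    ∀ y ∈ (fun q => lam • (q - p) + p) '' Sset 𝒟 p,
      ∀ z ∈ frontier (Sset 𝒟 p), (1 - lam) * c * M < dist y z := by
  obtain ⟨hsep, hsyn, hcells, hcover, hdisj, hface, hexist, hball, hdistv⟩ := hS
  have hcard : ∀ τ ∈ 𝒟, τ.card = d + 1 := fun τ hτ => (hcells τ hτ).1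
  have hsubP : ∀ τ ∈ 𝒟, (↑τ : Set (EuclideanSpace ℝ (Fin d))) ⊆ P :=
    fun τ hτ => (hcells τ hτ).2.1
  have hind : ∀ τ ∈ 𝒟, AffineIndependent ℝ
      (fun q : (τ : Set (EuclideanSpace ℝ (Fin d))) => (q : EuclideanSpace ℝ (Fin d))) :=
    fun τ hτ => (hcells τ hτ).2.2
  -- finiteness of the set of cells containing p
  have hDpfin : {τ ∈ 𝒟 | p ∈ τ}.Finite := by
    apply (cells_near_finite hM hsep hsubP hball p).subset
    rintro τ ⟨hτ, hpτ⟩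
    exact ⟨hτ, p, subset_convexHull ℝ _ (Finset.mem_coe.mpr hpτ), by simp⟩
  have hSclosed : IsClosed (Sset 𝒟 p) := by
    unfold Sset
    exact hDpfin.isClosed_biUnion fun τ _ => (τ.finite_toSet).isClosed_convexHull (𝕜 := ℝ)
  -- the minimal vertex-facet distance over all cells containing p
  set T := hDpfin.toFinset with hT
  obtain ⟨τs, hτsD, hpτs⟩ := hexist p hp
  have hTne : T.Nonempty := ⟨τs, by rw [hT, Set.Finite.mem_toFinset]; exact ⟨hτsD, hpτs⟩⟩
  set dfun : Finset (EuclideanSpace ℝ (Fin d)) → ℝ := fun τ =>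
    Metric.infDist p (affineSpan ℝ (↑(τ.erase p) : Set (EuclideanSpace ℝ (Fin d)))
      : Set (EuclideanSpace ℝ (Fin d))) with hdfun
  set D := (T.image dfun).min' (hTne.image _) with hD
  have hDmem := (T.image dfun).min'_mem (hTne.image _)
  rw [Finset.mem_image] at hDmem
  obtain ⟨τm, hτmT, hτmD⟩ := hDmem
  have hτm' : τm ∈ 𝒟 ∧ p ∈ τm := by rwa [hT, Set.Finite.mem_toFinset] at hτmT
  have hcMD : c * M < D := by rw [hD, ← hτmD]; exact hdistv τm hτm'.1 p hτm'.2
  have hD0 : 0 < D := lt_trans (by positivity) hcMD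
  have hDle : ∀ τ, τ ∈ 𝒟 → p ∈ τ → D ≤ dfun τ := by
    intro τ hτ hpτ
    exact Finset.min'_le _ _ (Finset.mem_image_of_mem dfun
      (by rw [hT, Set.Finite.mem_toFinset]; exact ⟨hτ, hpτ⟩))
  intro y hy z hz
  by_contra hcon
  push_neg at hcon
  obtain ⟨q, hqS, hyq⟩ := hy
  obtain ⟨τ₀, hτ₀D, hpτ₀, hqh⟩ := mem_Sset_iff.mp hqS
  have hyeq : y = lam • q + (1 - lam) • p := by
    rw [← hyq]
    show lam • (q - p) + p = lam • q + (1 - lam) • p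
    rw [smul_sub, sub_smul, one_smul]; abel
  have hphull : p ∈ convexHull ℝ (↑τ₀ : Set (EuclideanSpace ℝ (Fin d))) :=
    subset_convexHull ℝ _ (Finset.mem_coe.mpr hpτ₀)
  have hyhull : y ∈ convexHull ℝ (↑τ₀ : Set (EuclideanSpace ℝ (Fin d))) := by
    rw [hyeq]
    exact (convex_convexHull ℝ _) hqh hphull (le_of_lt h0) (by linarith) (by ring)
  have hqcoord : 0 ≤ (bOf τ₀ (hcard τ₀ hτ₀D) (hind τ₀ hτ₀D)).coord ⟨p, hpτ₀⟩ q := by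
    rw [hull_eq_coord τ₀ (hcard τ₀ hτ₀D) (hind τ₀ hτ₀D)] at hqh
    exact hqh ⟨p, hpτ₀⟩
  have hycoord : 1 - lam ≤ (bOf τ₀ (hcard τ₀ hτ₀D) (hind τ₀ hτ₀D)).coord ⟨p, hpτ₀⟩ y := by
    rw [hyeq, Convex.combo_affine_apply (by ring : lam + (1 - lam) = 1)]
    have hpp : (bOf τ₀ (hcard τ₀ hτ₀D) (hind τ₀ hτ₀D)).coord ⟨p, hpτ₀⟩ p = 1 :=
      (bOf τ₀ (hcard τ₀ hτ₀D) (hind τ₀ hτ₀D)).coord_apply_eq ⟨p, hpτ₀⟩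
    rw [hpp]
    simp only [smul_eq_mul]
    nlinarith
  have hyS : y ∈ Sset 𝒟 p := mem_Sset_iff.mpr ⟨τ₀, hτ₀D, hpτ₀, hyhull⟩
  rw [hSclosed.frontier_eq] at hz
  obtain ⟨hzS, hzint⟩ := hz
  -- the exit point
  set γ : ℝ → EuclideanSpace ℝ (Fin d) := fun t => y + t • (z - y) with hγ
  have hγcont : Continuous γ := by
    apply continuous_const.add
    exact (continuous_id.smul continuous_const)
  have hγ0 : γ 0 = y := by simp [hγ]
  have hγ1 : γ 1 = z := by simp [hγ]
  have hkey : ∃ t₁ ∈ Set.Icc (0:ℝ) 1, (∀ t ∈ Set.Icc (0:ℝ) t₁, γ t ∈ Sset 𝒟 p) ∧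
      γ t₁ ∈ Sset 𝒟 p ∧ γ t₁ ∉ interior (Sset 𝒟 p) := by
    set B := {t ∈ Set.Icc (0:ℝ) 1 | γ t ∉ Sset 𝒟 p} with hB
    by_cases hBne : B.Nonempty
    · have hBbdd : BddBelow B := ⟨0, fun t ht => ht.1.1⟩
      set t₁ := sInf B with ht₁
      have ht₁0 : 0 ≤ t₁ := le_csInf hBne fun t ht => ht.1.1
      have ht₁1 : t₁ ≤ 1 := by
        obtain ⟨t, ht⟩ := hBne; exact le_trans (csInf_le hBbdd ht) ht.1.2
      have hlt : ∀ t, 0 ≤ t → t < t₁ → γ t ∈ Sset 𝒟 p := by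
        intro t ht0 htlt
        by_contra hn
        exact absurd (csInf_le hBbdd ⟨⟨ht0, le_trans (le_of_lt htlt) ht₁1⟩, hn⟩)
          (not_le.mpr htlt)
      have ht₁S : γ t₁ ∈ Sset 𝒟 p := by
        by_contra hn
        have ht₁pos : 0 < t₁ := by
          rcases eq_or_lt_of_le ht₁0 with h | h
          · exfalso; rw [← h, hγ0] at hn; exact hn hyS
          · exact h
        have hopen : IsOpen (γ ⁻¹' (Sset 𝒟 p)ᶜ) := (hSclosed.isOpen_compl).preimage hγcont
        obtain ⟨δ, hδpos, hδball⟩ := Metric.isOpen_iff.mp hopen t₁ hn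
        set t' := t₁ - min δ t₁ / 2 with ht'
        have hmin : 0 < min δ t₁ := lt_min hδpos ht₁pos
        have hm1 : min δ t₁ ≤ δ := min_le_left _ _
        have hm2 : min δ t₁ ≤ t₁ := min_le_right _ _
        have h1 : t' < t₁ := by rw [ht']; linarith
        have h2 : 0 ≤ t' := by rw [ht']; linarith
        have h3 : t' ∈ Metric.ball t₁ δ := by
          rw [Metric.mem_ball, Real.dist_eq]
          have he : t' - t₁ = -(min δ t₁ / 2) := by rw [ht']; ring
          rw [he, abs_neg, abs_of_nonneg (by linarith)]
          linarith
        exact (hδball h3) (hlt t' h2 h1)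
      refine ⟨t₁, ⟨ht₁0, ht₁1⟩, ?_, ht₁S, ?_⟩
      · intro t ht
        rcases eq_or_lt_of_le ht.2 with h | h
        · rw [h]; exact ht₁S
        · exact hlt t ht.1 h
      · -- γ t₁ is in the closure of the complement, hence not interior
        intro hint
        obtain ⟨δ, hδpos, hδball⟩ := Metric.isOpen_iff.mp isOpen_interior _ hint
        set ε : ℝ := δ / (‖z - y‖ + 1) with hε
        have hnpos : 0 < ‖z - y‖ + 1 := by positivity
        have hεpos : 0 < ε := by positivity
        obtain ⟨b, hbB, hblt⟩ := exists_lt_of_csInf_lt hBne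
          (show t₁ < t₁ + ε by linarith)
        have hbt₁ : t₁ ≤ b := csInf_le hBbdd hbB
        have hdb : dist (γ b) (γ t₁) < δ := by
          have : γ b - γ t₁ = (b - t₁) • (z - y) := by
            show y + b • (z - y) - (y + t₁ • (z - y)) = (b - t₁) • (z - y)
            rw [sub_smul]; abel
          rw [dist_eq_norm, this, norm_smul, Real.norm_eq_abs,
            abs_of_nonneg (by linarith)]
          have hb1 : b - t₁ < ε := by linarith
          calc (b - t₁) * ‖z - y‖ ≤ (b - t₁) * (‖z - y‖ + 1) := by nlinarith [norm_nonneg (z - y)]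
            _ < ε * (‖z - y‖ + 1) := by
                apply mul_lt_mul_of_pos_right hb1 hnpos
            _ = δ := by rw [hε]; field_simp
        have : γ b ∈ interior (Sset 𝒟 p) := hδball (Metric.mem_ball.mpr hdb)
        exact hbB.2 (interior_subset this)
    · refine ⟨1, by norm_num, ?_, ?_, ?_⟩
      · intro t ht
        by_contra hn
        exact hBne ⟨t, ht, hn⟩
      · rw [hγ1]; exact hzS
      · rw [hγ1]; exact hzint
  obtain ⟨t₁, ht₁I, hseg, ht₁S, ht₁int⟩ := hkey
  set w' := γ t₁ with hw'
  obtain ⟨τ₁, hτ₁D, hpτ₁, hw'h⟩ := mem_Sset_iff.mp ht₁S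
  -- the rescaled segment from y to w'
  have hsubw : w' - y = t₁ • (z - y) := by rw [hw', hγ]; simp
  have hgam : ∀ t : ℝ, y + t • (w' - y) = γ (t * t₁) := by
    intro t
    rw [hsubw, smul_smul, hγ]
  set g : ℝ → ℝ := fun t => gcoord 𝒟 hcard hind p (y + t • (w' - y)) with hg
  set I : ↥T → Set ℝ := fun τi =>
    {t : ℝ | y + t • (w' - y) ∈
      convexHull ℝ (↑(τi : Finset (EuclideanSpace ℝ (Fin d))) : Set (EuclideanSpace ℝ (Fin d)))}
    with hI
  have hτT : ∀ i : ↥T, (i : Finset (EuclideanSpace ℝ (Fin d))) ∈ 𝒟 ∧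
      p ∈ (i : Finset (EuclideanSpace ℝ (Fin d))) := by
    intro i
    exact (Set.Finite.mem_toFinset hDpfin).mp i.2
  have hIcl : ∀ i, IsClosed (I i) := by
    intro i
    apply IsClosed.preimage
    · exact continuous_const.add (continuous_id.smul continuous_const)
    · exact (Finset.finite_toSet _).isClosed_convexHull (𝕜 := ℝ)
  have hcov : Set.Icc (0:ℝ) 1 ⊆ ⋃ i, I i := by
    intro t ht
    have htt : t * t₁ ∈ Set.Icc (0:ℝ) t₁ := by
      constructor
      · exact mul_nonneg ht.1 ht₁I.1
      · calc t * t₁ ≤ 1 * t₁ := mul_le_mul_of_nonneg_right ht.2 ht₁I.1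
          _ = t₁ := one_mul _
    have := hseg (t * t₁) htt
    obtain ⟨τ, hτD, hpτ, hthull⟩ := mem_Sset_iff.mp this
    refine Set.mem_iUnion.mpr ⟨⟨τ, ?_⟩, ?_⟩
    · rw [hT, Set.Finite.mem_toFinset]; exact ⟨hτD, hpτ⟩
    · rw [hI]; simp only [Set.mem_setOf_eq]; rw [hgam]; exact hthull
  have hgbound : ∀ i, ∀ s ∈ I i, ∀ t ∈ I i, |g t - g s| ≤ (dist y w' / D) * |t - s| := by
    intro i s hs t ht
    obtain ⟨hiD, hip⟩ := hτT i
    rw [hI] at hs ht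
    simp only [Set.mem_setOf_eq] at hs ht
    rw [hg]
    simp only []
    rw [gcoord_eq hcard hind hface hiD hip ht, gcoord_eq hcard hind hface hiD hip hs]
    have hlip := coord_lip (i : Finset (EuclideanSpace ℝ (Fin d)))
      (hcard _ hiD) (hind _ hiD) p hip D hD0
      (hDle _ hiD hip) (y + t • (w' - y)) (y + s • (w' - y))
    refine le_trans hlip ?_
    have hdeq : dist (y + t • (w' - y)) (y + s • (w' - y)) = |t - s| * dist y w' := by
      have h1 : (y + t • (w' - y)) - (y + s • (w' - y)) = (t - s) • (w' - y) := by
        rw [sub_smul]; abel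
      rw [dist_eq_norm, h1, norm_smul, Real.norm_eq_abs]
      congr 1
      rw [dist_eq_norm, norm_sub_rev]
    rw [hdeq]
    apply le_of_eq
    ring
  have hmain := segLip I hIcl hcov g (dist y w' / D) hgbound
  have hg0 : g 0 = (bOf τ₀ (hcard τ₀ hτ₀D) (hind τ₀ hτ₀D)).coord ⟨p, hpτ₀⟩ y := by
    rw [hg]
    simp only [zero_smul, add_zero]
    exact gcoord_eq hcard hind hface hτ₀D hpτ₀ hyhull
  have hg1 : g 1 = 0 := by
    rw [hg]
    simp only [one_smul]
    have h1 : y + (w' - y) = w' := by abel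
    rw [h1, gcoord_eq hcard hind hface hτ₁D hpτ₁ hw'h]
    by_contra hne
    have hge : 0 ≤ (bOf τ₁ (hcard τ₁ hτ₁D) (hind τ₁ hτ₁D)).coord ⟨p, hpτ₁⟩ w' := by
      rw [hull_eq_coord τ₁ (hcard τ₁ hτ₁D) (hind τ₁ hτ₁D)] at hw'h
      exact hw'h ⟨p, hpτ₁⟩
    have hpos : 0 < (bOf τ₁ (hcard τ₁ hτ₁D) (hind τ₁ hτ₁D)).coord ⟨p, hpτ₁⟩ w' :=
      lt_of_le_of_ne hge (Ne.symm hne)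
    exact ht₁int (mem_interior_Sset hM hsep hsubP hball hcover hface hτ₁D
      (hcard τ₁ hτ₁D) (hind τ₁ hτ₁D) hpτ₁ hw'h hpos)
  rw [hg1, hg0] at hmain
  have hcoordy : 1 - lam ≤
      |0 - (bOf τ₀ (hcard τ₀ hτ₀D) (hind τ₀ hτ₀D)).coord ⟨p, hpτ₀⟩ y| := by
    rw [zero_sub, abs_neg, abs_of_nonneg (by linarith [hycoord])]
    exact hycoord
  have hfinal : 1 - lam ≤ dist y w' / D := le_trans hcoordy hmain
  have hdyw : dist y w' ≤ dist y z := by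
    have h1 : dist y w' = t₁ * ‖z - y‖ := by
      rw [dist_eq_norm]
      have : y - w' = -(t₁ • (z - y)) := by rw [← hsubw]; abel
      rw [this, norm_neg, norm_smul, Real.norm_eq_abs, abs_of_nonneg ht₁I.1]
    have h2 : dist y z = ‖z - y‖ := by rw [dist_eq_norm, norm_sub_rev]
    rw [h1, h2]
    calc t₁ * ‖z - y‖ ≤ 1 * ‖z - y‖ :=
          mul_le_mul_of_nonneg_right ht₁I.2 (norm_nonneg _)
      _ = ‖z - y‖ := one_mul _
  have hstep : 1 - lam ≤ (1 - lam) * c * M / D := by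
    refine le_trans hfinal ?_
    exact (div_le_div_iff_of_pos_right hD0).mpr (le_trans hdyw hcon)
  rw [le_div_iff₀ hD0] at hstep
  have h1l : 0 < 1 - lam := by linarith
  nlinarith
end
end
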